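/- arXiv:2009.05633 — 7 statements merged into one kernel-verified Lean document; each statement's English description precedes it below -/
import Mathlib

section
/- Assume 0 < m < 1 and 1 < r < 2/m. Then the envelope velocity s_env attains its minimum on (0,1) at a unique point γ_lin ∈ (0,1), i.e. s_env(γ_lin) < s_env(γ) for all γ ∈ (0,1) with γ ≠ γ_lin. Moreover s_lin := s_env(γ_lin) < 1, and for every s with s_lin < s < 1 the equation s_env(γ) = s has exactly two solutions γ in (0,1), and these satisfy 0 < γ_s < γ_lin < γ_w < 1. -/
open Real Set

/-- The envelope velocity `s_env(γ) = 1 - log(a + b γ + a γ²) / log γ`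
with `a = r m / 2` and `b = r (1 - m)`. -/
noncomputable def sEnv (r m γ : ℝ) : ℝ :=
  1 - Real.log (r * m / 2 + r * (1 - m) * γ + r * m / 2 * γ ^ 2) / Real.log γ

namespace SENV

variable {a b : ℝ}

def Pq (a b γ : ℝ) : ℝ := a + b * γ + a * γ ^ 2

noncomputable def E (a b γ : ℝ) : ℝ := 1 - Real.log (Pq a b γ) / Real.log γ

noncomputable def phi (a b γ : ℝ) : ℝ :=
  (b * γ + 2 * a * γ ^ 2) / Pq a b γ * Real.log γ - Real.log (Pq a b γ)

lemma Pq_pos (ha : 0 < a) (hb : 0 < b) {γ : ℝ} (hγ : 0 ≤ γ) : 0 < Pq a b γ := by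
  unfold Pq; nlinarith [sq_nonneg γ]

lemma hasDerivAt_Pq (γ : ℝ) : HasDerivAt (fun x => Pq a b x) (b + 2 * a * γ) γ := by
  have h1 : HasDerivAt (fun x : ℝ => a + b * x + a * x ^ 2)
      (0 + b * 1 + a * (2 * γ ^ 1)) γ := by
    exact ((hasDerivAt_const γ a).add ((hasDerivAt_id γ).const_mul b)).add
      ((hasDerivAt_pow 2 γ).const_mul a)
  convert h1 using 1
  · rfl
  ring

lemma hasDerivAt_phi {γ : ℝ} (hγ0 : 0 < γ) (hP : 0 < Pq a b γ) :
    HasDerivAt (fun x => phi a b x)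
      ((a * b + 4 * a ^ 2 * γ + a * b * γ ^ 2) / (Pq a b γ) ^ 2 * Real.log γ) γ := by
  have hPne : Pq a b γ ≠ 0 := ne_of_gt hP
  have hγne : γ ≠ 0 := ne_of_gt hγ0
  have hN : HasDerivAt (fun x : ℝ => b * x + 2 * a * x ^ 2) (b + 4 * a * γ) γ := by
    have h1 : HasDerivAt (fun x : ℝ => b * x + 2 * a * x ^ 2)
        (b * 1 + 2 * a * (2 * γ ^ 1)) γ :=
      ((hasDerivAt_id γ).const_mul b).add ((hasDerivAt_pow 2 γ).const_mul (2 * a))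
    convert h1 using 1; ring
  have hPd := hasDerivAt_Pq (a := a) (b := b) γ
  have hR := hN.div hPd hPne
  have hlog := Real.hasDerivAt_log hγne
  have h1 := hR.mul hlog
  have h2 := hPd.log hPne
  have h3 := h1.sub h2
  have key : (b * γ + 2 * a * γ ^ 2) / Pq a b γ * γ⁻¹ = (b + 2 * a * γ) / Pq a b γ := by
    field_simp
  have num : (b + 4 * a * γ) * Pq a b γ - (b * γ + 2 * a * γ ^ 2) * (b + 2 * a * γ)
      = a * b + 4 * a ^ 2 * γ + a * b * γ ^ 2 := by unfold Pq; ring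
  simp only [Pi.div_apply] at h3
  rw [key, num] at h3
  refine h3.congr_deriv ?_
  ring

lemma phi_anti (ha : 0 < a) (hb : 0 < b) : StrictAntiOn (phi a b) (Ioo 0 1) := by
  apply strictAntiOn_of_deriv_neg (convex_Ioo 0 1)
  · intro γ hγ
    exact (hasDerivAt_phi hγ.1 (Pq_pos ha hb hγ.1.le)).continuousAt.continuousWithinAt
  · intro γ hγ
    rw [interior_Ioo] at hγ
    rw [(hasDerivAt_phi hγ.1 (Pq_pos ha hb hγ.1.le)).deriv]
    have hlog : Real.log γ < 0 := Real.log_neg hγ.1 hγ.2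
    have hnum : 0 < (a * b + 4 * a ^ 2 * γ + a * b * γ ^ 2) / (Pq a b γ) ^ 2 := by
      have hPp := Pq_pos ha hb hγ.1.le
      have h1 : 0 < a * b + 4 * a ^ 2 * γ + a * b * γ ^ 2 := by
        nlinarith [mul_pos ha hb, mul_pos (mul_pos ha ha) hγ.1,
          mul_pos (mul_pos ha hb) (mul_pos hγ.1 hγ.1)]
      exact div_pos h1 (pow_pos hPp 2)
    exact mul_neg_of_pos_of_neg hnum hlog

lemma hasDerivAt_E {γ : ℝ} (hγ : γ ∈ Ioo (0:ℝ) 1) (hP : 0 < Pq a b γ) :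
    HasDerivAt (fun x => E a b x) (-(phi a b γ / (γ * (Real.log γ) ^ 2))) γ := by
  have hγne : γ ≠ 0 := ne_of_gt hγ.1
  have hPne : Pq a b γ ≠ 0 := ne_of_gt hP
  have hlogne : Real.log γ ≠ 0 := ne_of_lt (Real.log_neg hγ.1 hγ.2)
  have h2 := (hasDerivAt_Pq γ).log hPne
  have hF := h2.div (Real.hasDerivAt_log hγne) hlogne
  have hE := hF.const_sub 1
  refine hE.congr_deriv ?_
  unfold phi
  field_simp

lemma phi_neg (ha : 0 < a) (hb : 0 < b) {γ : ℝ} (hγ : γ ∈ Ioo (0:ℝ) 1)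
    (h1 : 1 < Pq a b γ) : phi a b γ < 0 := by
  have hP := Pq_pos ha hb hγ.1.le
  have hlog : Real.log γ < 0 := Real.log_neg hγ.1 hγ.2
  have hR : 0 ≤ (b * γ + 2 * a * γ ^ 2) / Pq a b γ := by
    apply div_nonneg _ hP.le
    nlinarith [hγ.1.le, sq_nonneg γ]
  have h2 : 0 < Real.log (Pq a b γ) := Real.log_pos h1
  have h3 : (b * γ + 2 * a * γ ^ 2) / Pq a b γ * Real.log γ ≤ 0 :=
    mul_nonpos_of_nonneg_of_nonpos hR hlog.le
  unfold phi; linarith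

lemma exists_phi_pos (ha : 0 < a) (hb : 0 < b) (ha1 : a < 1) (hr : 1 < 2 * a + b) :
    ∃ γ0 ∈ Ioo (0:ℝ) 1, 0 < phi a b γ0 := by
  set ε := -Real.log ((1 + a) / 2) with hεdef
  have hε : 0 < ε := by
    have := Real.log_neg (by linarith : (0:ℝ) < (1 + a) / 2) (by linarith : (1 + a) / 2 < 1)
    simp only [hεdef]; linarith
  set δ := ε * a / (2 * (2 * a + b)) with hδdef
  have hδ : 0 < δ := div_pos (mul_pos hε ha) (by linarith)
  set c1 := (1 - a) / (2 * (a + b)) with hc1def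
  have hab : 0 < a + b := by linarith
  have hc1 : 0 < c1 := div_pos (by linarith) (by linarith)
  have hc1lt : c1 < 1 := by
    rw [hc1def, div_lt_one (by linarith)]; linarith
  set γ0 := min c1 (δ ^ 2) / 2 with hγ0def
  have hγ00 : 0 < γ0 := by
    have := lt_min hc1 (pow_pos hδ 2)
    simp only [hγ0def]; linarith
  have hγ0c1 : γ0 < c1 := by
    have h := min_le_left c1 (δ ^ 2)
    simp only [hγ0def]; linarith
  have hγ0δ : γ0 < δ ^ 2 := by
    have h := min_le_right c1 (δ ^ 2)
    have := pow_pos hδ 2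
    simp only [hγ0def]; linarith
  have hγ01 : γ0 < 1 := hγ0c1.trans hc1lt
  have hγ0sq : γ0 ^ 2 ≤ γ0 := by nlinarith
  -- P bound
  have hc1eq : 2 * (a + b) * c1 = 1 - a := by
    rw [hc1def]; field_simp
  have hPle : Pq a b γ0 ≤ (1 + a) / 2 := by
    unfold Pq
    nlinarith [mul_le_mul_of_nonneg_left hγ0c1.le hab.le]
  have hPpos := Pq_pos ha hb hγ00.le
  have hPne : (0:ℝ) < (1 + a) / 2 := by linarith
  have hlogP : Real.log (Pq a b γ0) ≤ -ε := by
    have := Real.log_le_log hPpos hPle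
    simp only [hεdef]; linarith
  -- R bound
  set R := (b * γ0 + 2 * a * γ0 ^ 2) / Pq a b γ0 with hRdef
  have hNnn : 0 ≤ b * γ0 + 2 * a * γ0 ^ 2 := by nlinarith
  have hNle : b * γ0 + 2 * a * γ0 ^ 2 ≤ (2 * a + b) * γ0 := by nlinarith
  have haP : a ≤ Pq a b γ0 := by unfold Pq; nlinarith
  have hRle : R ≤ (2 * a + b) * γ0 / a := by
    calc R ≤ (b * γ0 + 2 * a * γ0 ^ 2) / a :=
          div_le_div_of_nonneg_left hNnn ha haP
      _ ≤ (2 * a + b) * γ0 / a := (div_le_div_iff_of_pos_right ha).2 hNle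
  -- log bound
  have hs : 0 < Real.sqrt γ0 := Real.sqrt_pos.2 hγ00
  have hlogγ : -Real.log γ0 ≤ 2 / Real.sqrt γ0 := by
    have h1 : Real.log (Real.sqrt γ0)⁻¹ ≤ (Real.sqrt γ0)⁻¹ - 1 :=
      Real.log_le_sub_one_of_pos (inv_pos.2 hs)
    rw [Real.log_inv, Real.log_sqrt hγ00.le] at h1
    have h3 : 2 / Real.sqrt γ0 = 2 * (Real.sqrt γ0)⁻¹ := by rw [div_eq_mul_inv]
    rw [h3]
    linarith
  have hRnn : 0 ≤ R := div_nonneg hNnn hPpos.le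
  have hlognn : 0 ≤ -Real.log γ0 := by
    have := Real.log_neg hγ00 hγ01; linarith
  have hchain : R * (-Real.log γ0) ≤ ((2 * a + b) * γ0 / a) * (2 / Real.sqrt γ0) := by
    apply mul_le_mul hRle hlogγ hlognn
    positivity
  have heq1 : ((2 * a + b) * γ0 / a) * (2 / Real.sqrt γ0)
      = (2 * (2 * a + b) / a) * (γ0 / Real.sqrt γ0) := by ring
  have heq2 : γ0 / Real.sqrt γ0 = Real.sqrt γ0 := Real.div_sqrt
  have hsqlt : Real.sqrt γ0 < δ := by
    have h1 : Real.sqrt γ0 < Real.sqrt (δ ^ 2) := Real.sqrt_lt_sqrt hγ00.le hγ0δ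
    rwa [Real.sqrt_sq hδ.le] at h1
  have hfin : (2 * (2 * a + b) / a) * Real.sqrt γ0 < (2 * (2 * a + b) / a) * δ := by
    apply mul_lt_mul_of_pos_left hsqlt
    positivity
  have hδeq : (2 * (2 * a + b) / a) * δ = ε := by
    rw [hδdef]; field_simp
  have hRbound : R * (-Real.log γ0) < ε := by
    rw [heq1, heq2] at hchain
    exact lt_of_le_of_lt hchain (hδeq ▸ hfin)
  refine ⟨γ0, ⟨hγ00, hγ01⟩, ?_⟩
  have hid : R * Real.log γ0 = -(R * (-Real.log γ0)) := by ring
  unfold phi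
  rw [← hRdef]
  linarith

lemma Pq_gt_one (ha : 0 < a) (hb : 0 < b) (hr : 1 < 2 * a + b) {γ : ℝ}
    (hγ1 : γ < 1) (hq : (Real.sqrt (2 * a + b))⁻¹ < γ) : 1 < Pq a b γ := by
  have hrpos : (0:ℝ) < 2 * a + b := by linarith
  have hsq : Real.sqrt (2 * a + b) > 0 := Real.sqrt_pos.2 hrpos
  have hq0 : (0:ℝ) < (Real.sqrt (2 * a + b))⁻¹ := inv_pos.2 hsq
  have hγ0 : 0 < γ := hq0.trans hq
  have h1 : ((Real.sqrt (2 * a + b))⁻¹) ^ 2 < γ ^ 2 := by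
    apply pow_lt_pow_left₀ hq hq0.le
    norm_num
  have h2 : ((Real.sqrt (2 * a + b))⁻¹) ^ 2 = (2 * a + b)⁻¹ := by
    rw [← Real.sq_sqrt hrpos.le]
    rw [inv_pow]
    congr 1
    rw [Real.sq_sqrt hrpos.le, Real.sq_sqrt hrpos.le]
  have h3 : (2 * a + b) * γ ^ 2 > 1 := by
    rw [h2] at h1
    have := mul_lt_mul_of_pos_left h1 hrpos
    rwa [mul_inv_cancel₀ (ne_of_gt hrpos)] at this
  have h4 : (2 * a + b) * γ ^ 2 ≤ Pq a b γ := by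
    have e1 : (0:ℝ) ≤ a * (1 - γ ^ 2) := mul_nonneg ha.le (by nlinarith)
    have e2 : (0:ℝ) ≤ b * (γ * (1 - γ)) :=
      mul_nonneg hb.le (mul_nonneg hγ0.le (by linarith))
    unfold Pq; nlinarith [e1, e2]
  linarith

lemma E_gt_one (ha : 0 < a) (hb : 0 < b) {γ : ℝ} (hγ : γ ∈ Ioo (0:ℝ) 1)
    (h1 : 1 < Pq a b γ) : 1 < E a b γ := by
  have hlogP : 0 < Real.log (Pq a b γ) := Real.log_pos h1
  have hlogγ : Real.log γ < 0 := Real.log_neg hγ.1 hγ.2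
  have : Real.log (Pq a b γ) / Real.log γ < 0 := div_neg_of_pos_of_neg hlogP hlogγ
  unfold E; linarith

lemma E_lt_one (ha : 0 < a) (hb : 0 < b) {γ : ℝ} (hγ : γ ∈ Ioo (0:ℝ) 1)
    (h1 : Pq a b γ < 1) : E a b γ < 1 := by
  have hP := Pq_pos ha hb hγ.1.le
  have hlogP : Real.log (Pq a b γ) < 0 := Real.log_neg hP h1
  have hlogγ : Real.log γ < 0 := Real.log_neg hγ.1 hγ.2
  have : 0 < Real.log (Pq a b γ) / Real.log γ := div_pos_iff.2 (Or.inr ⟨hlogP, hlogγ⟩)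
  unfold E; linarith

lemma exists_E_lt_one (ha : 0 < a) (hb : 0 < b) (ha1 : a < 1) (hr : 1 < 2 * a + b) :
    ∃ γ ∈ Ioo (0:ℝ) 1, E a b γ < 1 := by
  set c1 := (1 - a) / (2 * (a + b)) with hc1def
  have hab : 0 < a + b := by linarith
  have hc1 : 0 < c1 := div_pos (by linarith) (by linarith)
  have hc1lt : c1 < 1 := by rw [hc1def, div_lt_one (by linarith)]; linarith
  have hc1eq : 2 * (a + b) * c1 = 1 - a := by rw [hc1def]; field_simp
  have hmem : c1 ∈ Ioo (0:ℝ) 1 := ⟨hc1, hc1lt⟩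
  refine ⟨c1, hmem, E_lt_one ha hb hmem ?_⟩
  unfold Pq
  nlinarith [sq_nonneg c1, mul_pos hc1 hc1]

theorem main (ha : 0 < a) (hb : 0 < b) (ha1 : a < 1) (hr : 1 < 2 * a + b) :
    ∃ γlin ∈ Ioo (0:ℝ) 1,
      (∀ γ ∈ Ioo (0:ℝ) 1, γ ≠ γlin → E a b γlin < E a b γ) ∧
      E a b γlin < 1 ∧
      ∀ s : ℝ, E a b γlin < s → s < 1 →
        ∃ γs γw : ℝ, 0 < γs ∧ γs < γlin ∧ γlin < γw ∧ γw < 1 ∧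
          E a b γs = s ∧ E a b γw = s ∧
          ∀ γ ∈ Ioo (0:ℝ) 1, E a b γ = s → γ = γs ∨ γ = γw := by
  have hrpos : (0:ℝ) < 2 * a + b := by linarith
  set q := (Real.sqrt (2 * a + b))⁻¹ with hqdef
  have hsq1 : 1 < Real.sqrt (2 * a + b) := by
    have : Real.sqrt 1 < Real.sqrt (2 * a + b) := Real.sqrt_lt_sqrt (by norm_num) hr
    rwa [Real.sqrt_one] at this
  have hq0 : 0 < q := inv_pos.2 (by linarith)
  have hq1 : q < 1 := by
    rw [hqdef, inv_lt_one_iff₀]; right; exact hsq1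
  -- endpoints for phi
  obtain ⟨γ0, hγ0mem, hφ0⟩ := exists_phi_pos ha hb ha1 hr
  set γ1 := (max γ0 q + 1) / 2 with hγ1def
  have hmaxlt : max γ0 q < 1 := max_lt hγ0mem.2 hq1
  have hγ11 : γ1 < 1 := by rw [hγ1def]; linarith
  have hγ01 : γ0 < γ1 := by
    have := le_max_left γ0 q
    rw [hγ1def]; linarith [le_max_left γ0 q, le_max_right γ0 q]
  have hγ1q : q < γ1 := by
    rw [hγ1def]; linarith [le_max_right γ0 q]
  have hγ1pos : 0 < γ1 := hq0.trans hγ1q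
  have hγ1mem : γ1 ∈ Ioo (0:ℝ) 1 := ⟨hγ1pos, hγ11⟩
  have hφ1 : phi a b γ1 < 0 := phi_neg ha hb hγ1mem (Pq_gt_one ha hb hr hγ11 hγ1q)
  -- find γlin
  have hconn : ContinuousOn (phi a b) (Icc γ0 γ1) := by
    intro γ hγ
    have hγpos : 0 < γ := lt_of_lt_of_le hγ0mem.1 hγ.1
    exact (hasDerivAt_phi hγpos (Pq_pos ha hb hγpos.le)).continuousAt.continuousWithinAt
  have hIVT := intermediate_value_Icc' hγ01.le hconn
  obtain ⟨γlin, hγlinIcc, hγlin0⟩ := hIVT ⟨hφ1.le, hφ0.le⟩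
  have hγlinmem : γlin ∈ Ioo (0:ℝ) 1 :=
    ⟨lt_of_lt_of_le hγ0mem.1 hγlinIcc.1, lt_of_le_of_lt hγlinIcc.2 hγ11⟩
  have hγlin1 : γlin < 1 := hγlinmem.2
  have hγlinpos : 0 < γlin := hγlinmem.1
  -- sign of phi on each side
  have hA := phi_anti ha hb
  have hsign_pos : ∀ γ ∈ Ioo (0:ℝ) 1, γ < γlin → 0 < phi a b γ := by
    intro γ hγ hlt
    have := hA hγ hγlinmem hlt
    rwa [hγlin0] at this
  have hsign_neg : ∀ γ ∈ Ioo (0:ℝ) 1, γlin < γ → phi a b γ < 0 := by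
    intro γ hγ hlt
    have := hA hγlinmem hγ hlt
    rwa [hγlin0] at this
  -- monotonocity of E
  have hanti : StrictAntiOn (E a b) (Ioc 0 γlin) := by
    apply strictAntiOn_of_deriv_neg (convex_Ioc _ _)
    · intro γ hγ
      have hγm : γ ∈ Ioo (0:ℝ) 1 := ⟨hγ.1, lt_of_le_of_lt hγ.2 hγlin1⟩
      exact (hasDerivAt_E hγm (Pq_pos ha hb hγm.1.le)).continuousAt.continuousWithinAt
    · intro γ hγ
      rw [interior_Ioc] at hγ
      have hγm : γ ∈ Ioo (0:ℝ) 1 := ⟨hγ.1, lt_trans hγ.2 hγlin1⟩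
      rw [(hasDerivAt_E hγm (Pq_pos ha hb hγm.1.le)).deriv]
      have hφ : 0 < phi a b γ := hsign_pos γ hγm hγ.2
      have hlog : Real.log γ < 0 := Real.log_neg hγm.1 hγm.2
      have hsq : 0 < Real.log γ ^ 2 := by nlinarith
      have : 0 < phi a b γ / (γ * Real.log γ ^ 2) := div_pos hφ (mul_pos hγm.1 hsq)
      linarith
  have hmono : StrictMonoOn (E a b) (Ico γlin 1) := by
    apply strictMonoOn_of_deriv_pos (convex_Ico _ _)
    · intro γ hγ
      have hγm : γ ∈ Ioo (0:ℝ) 1 := ⟨lt_of_lt_of_le hγlinpos hγ.1, hγ.2⟩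
      exact (hasDerivAt_E hγm (Pq_pos ha hb hγm.1.le)).continuousAt.continuousWithinAt
    · intro γ hγ
      rw [interior_Ico] at hγ
      have hγm : γ ∈ Ioo (0:ℝ) 1 := ⟨lt_trans hγlinpos hγ.1, hγ.2⟩
      rw [(hasDerivAt_E hγm (Pq_pos ha hb hγm.1.le)).deriv]
      have hφ : phi a b γ < 0 := hsign_neg γ hγm hγ.1
      have hlog : Real.log γ < 0 := Real.log_neg hγm.1 hγm.2
      have hsq : 0 < Real.log γ ^ 2 := by nlinarith
      have hden : 0 < γ * Real.log γ ^ 2 := mul_pos hγm.1 hsq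
      have : phi a b γ / (γ * Real.log γ ^ 2) < 0 := div_neg_of_neg_of_pos hφ hden
      linarith
  -- minimum property
  have hmin : ∀ γ ∈ Ioo (0:ℝ) 1, γ ≠ γlin → E a b γlin < E a b γ := by
    intro γ hγ hne
    rcases lt_or_gt_of_ne hne with h | h
    · exact hanti ⟨hγ.1, h.le⟩ ⟨hγlinpos, le_refl _⟩ h
    · exact hmono ⟨le_refl _, hγlin1⟩ ⟨h.le, hγ.2⟩ h
  -- E γlin < 1
  obtain ⟨γc, hγcmem, hγclt⟩ := exists_E_lt_one ha hb ha1 hr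
  have hElt1 : E a b γlin < 1 := by
    rcases eq_or_ne γc γlin with h | h
    · rwa [h] at hγclt
    · exact lt_trans (hmin γc hγcmem h) hγclt
  refine ⟨γlin, hγlinmem, hmin, hElt1, ?_⟩
  intro s hs1 hs2
  have hs1' : 0 < 1 - s := by linarith
  -- left point γa with E > s
  set gA := a ^ ((1:ℝ) / (1 - s)) with hgAdef
  have hgA0 : 0 < gA := Real.rpow_pos_of_pos ha _
  set γa := min γlin gA / 2 with hγadef
  have hγa0 : 0 < γa := by
    have := lt_min hγlinpos hgA0
    rw [hγadef]; linarith
  have hγalt : γa < γlin := by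
    have := min_le_left γlin gA
    rw [hγadef]; linarith
  have hγagA : γa < gA := by
    have := min_le_right γlin gA
    rw [hγadef]; linarith
  have hγa1 : γa < 1 := hγalt.trans hγlin1
  have hγamem : γa ∈ Ioo (0:ℝ) 1 := ⟨hγa0, hγa1⟩
  have hpow : γa ^ (1 - s) < a := by
    have h1 : γa ^ (1 - s) < gA ^ (1 - s) := Real.rpow_lt_rpow hγa0.le hγagA hs1'
    have h2 : gA ^ (1 - s) = a := by
      rw [hgAdef, ← Real.rpow_mul ha.le, one_div, inv_mul_cancel₀ (ne_of_gt hs1'),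
        Real.rpow_one]
    rwa [h2] at h1
  have hPa : γa ^ (1 - s) < Pq a b γa := by
    have : a ≤ Pq a b γa := by unfold Pq; nlinarith [sq_nonneg γa]
    linarith
  have hEγa : s < E a b γa := by
    have hlogγa : Real.log γa < 0 := Real.log_neg hγa0 hγa1
    have h2 : (1 - s) * Real.log γa < Real.log (Pq a b γa) := by
      have := Real.log_lt_log (Real.rpow_pos_of_pos hγa0 _) hPa
      rwa [Real.log_rpow hγa0] at this
    have h3 : Real.log (Pq a b γa) / Real.log γa < 1 - s := by
      rw [div_lt_iff_of_neg hlogγa]; exact h2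
    unfold E; linarith
  -- IVT for γs
  have hcont1 : ContinuousOn (E a b) (Icc γa γlin) := by
    intro γ hγ
    have hγm : γ ∈ Ioo (0:ℝ) 1 :=
      ⟨lt_of_lt_of_le hγa0 hγ.1, lt_of_le_of_lt hγ.2 hγlin1⟩
    exact (hasDerivAt_E hγm (Pq_pos ha hb hγm.1.le)).continuousAt.continuousWithinAt
  obtain ⟨γs, hγsmem, hγsE⟩ := intermediate_value_Ioo' hγalt.le hcont1 ⟨hs1, hEγa⟩
  -- right point γd with E > s
  set γd := (max γlin q + 1) / 2 with hγddef
  have hmaxlt2 : max γlin q < 1 := max_lt hγlin1 hq1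
  have hγd1 : γd < 1 := by rw [hγddef]; linarith
  have hγdlt : γlin < γd := by
    rw [hγddef]; linarith [le_max_left γlin q, le_max_right γlin q]
  have hγdq : q < γd := by
    rw [hγddef]; linarith [le_max_right γlin q]
  have hγdmem : γd ∈ Ioo (0:ℝ) 1 := ⟨hq0.trans hγdq, hγd1⟩
  have hEγd : s < E a b γd := by
    have := E_gt_one ha hb hγdmem (Pq_gt_one ha hb hr hγd1 hγdq)
    linarith
  have hcont2 : ContinuousOn (E a b) (Icc γlin γd) := by
    intro γ hγ
    have hγm : γ ∈ Ioo (0:ℝ) 1 :=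
      ⟨lt_of_lt_of_le hγlinpos hγ.1, lt_of_le_of_lt hγ.2 hγd1⟩
    exact (hasDerivAt_E hγm (Pq_pos ha hb hγm.1.le)).continuousAt.continuousWithinAt
  obtain ⟨γw, hγwmem, hγwE⟩ := intermediate_value_Ioo hγdlt.le hcont2 ⟨hs1, hEγd⟩
  refine ⟨γs, γw, hγa0.trans hγsmem.1, hγsmem.2, hγwmem.1, hγwmem.2.trans hγd1, hγsE, hγwE, ?_⟩
  intro γ hγ hEγ
  rcases lt_trichotomy γ γlin with h | h | h
  · left
    refine hanti.injOn ⟨hγ.1, h.le⟩ ⟨hγa0.trans hγsmem.1, hγsmem.2.le⟩ ?_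
    rw [hEγ, hγsE]
  · exfalso
    rw [h] at hEγ
    rw [hEγ] at hs1
    exact lt_irrefl _ hs1
  · right
    refine hmono.injOn ⟨h.le, hγ.2⟩ ⟨hγwmem.1.le, hγwmem.2.trans hγd1⟩ ?_
    rw [hEγ, hγwE]

end SENV

theorem stmt_0 (r m : ℝ) (hm0 : 0 < m) (hm1 : m < 1) (hr1 : 1 < r) (hr2 : r < 2 / m) :
    ∃ γlin ∈ Set.Ioo (0 : ℝ) 1,
      (∀ γ ∈ Set.Ioo (0 : ℝ) 1, γ ≠ γlin → sEnv r m γlin < sEnv r m γ) ∧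
      sEnv r m γlin < 1 ∧
      ∀ s : ℝ, sEnv r m γlin < s → s < 1 →
        ∃ γs γw : ℝ, 0 < γs ∧ γs < γlin ∧ γlin < γw ∧ γw < 1 ∧
          sEnv r m γs = s ∧ sEnv r m γw = s ∧
          ∀ γ ∈ Set.Ioo (0 : ℝ) 1, sEnv r m γ = s → γ = γs ∨ γ = γw := by
  have hr0 : (0:ℝ) < r := by linarith
  have ha : 0 < r * m / 2 := by positivity
  have hb : 0 < r * (1 - m) := mul_pos hr0 (by linarith)
  have ha1 : r * m / 2 < 1 := by
    have h := (lt_div_iff₀ hm0).1 hr2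
    linarith
  have hrr : 1 < 2 * (r * m / 2) + r * (1 - m) := by
    have h : 2 * (r * m / 2) + r * (1 - m) = r := by ring
    linarith
  have hE : ∀ γ, sEnv r m γ = SENV.E (r * m / 2) (r * (1 - m)) γ := fun γ => rfl
  simp only [hE]
  exact SENV.main ha hb ha1 hrr
end

section
/- Let r > 1 and let 0 < m₁ < m₂ < 1 with r*m₂ < 2. For j = 1, 2 the minimum s_lin(m_j) = min over γ ∈ (0,1) of s_env(γ; m_j) exists, and s_lin(m₁) < s_lin(m₂); that is, the linear spreading speed is strictly increasing as a function of the migration rate m. -/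
open Real Filter Set Topology

noncomputable def Pf (r m γ : ℝ) : ℝ := r * m / 2 + r * (1 - m) * γ + r * m / 2 * γ ^ 2

lemma sEnv_eq (r m γ : ℝ) : sEnv r m γ = 1 - Real.log (Pf r m γ) / Real.log γ := rfl

lemma Pf_pos {r m γ : ℝ} (hr : 1 < r) (hm0 : 0 < m) (hm1 : m < 1) (hγ : 0 ≤ γ) :
    0 < Pf r m γ := by
  have hr' : (0:ℝ) < r := by linarith
  have h1 : 0 < r * m / 2 := by positivity
  have h2 : 0 ≤ r * (1 - m) * γ :=
    mul_nonneg (mul_nonneg hr'.le (by linarith)) hγ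
  have h3 : 0 ≤ r * m / 2 * γ ^ 2 := by positivity
  unfold Pf; linarith

lemma Pf_continuous (r m : ℝ) : Continuous (Pf r m) := by
  unfold Pf; continuity

lemma sEnv_continuousOn {r m : ℝ} (hr : 1 < r) (hm0 : 0 < m) (hm1 : m < 1) :
    ContinuousOn (sEnv r m) (Ioo 0 1) := by
  have : ContinuousOn (fun γ => 1 - Real.log (Pf r m γ) / Real.log γ) (Ioo (0:ℝ) 1) := by
    apply continuousOn_const.sub
    apply ContinuousOn.div
    · exact ContinuousOn.log (Pf_continuous r m).continuousOn
        (fun x hx => (Pf_pos hr hm0 hm1 hx.1.le).ne')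
    · exact ContinuousOn.log continuousOn_id (fun x hx => hx.1.ne')
    · exact fun x hx => (Real.log_neg hx.1 hx.2).ne
  exact this

lemma sEnv_strictMono {r m₁ m₂ γ : ℝ} (hr : 1 < r) (hm₁ : 0 < m₁) (hm₁₂ : m₁ < m₂)
    (hm₂ : m₂ < 1) (hγ : γ ∈ Ioo (0:ℝ) 1) : sEnv r m₁ γ < sEnv r m₂ γ := by
  have hr' : (0:ℝ) < r := by linarith
  have hlogγ : Real.log γ < 0 := Real.log_neg hγ.1 hγ.2
  have hP1 : 0 < Pf r m₁ γ := Pf_pos hr hm₁ (by linarith) hγ.1.le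
  have hPlt : Pf r m₁ γ < Pf r m₂ γ := by
    have key : 0 < r * (m₂ - m₁) * (1 - γ) ^ 2 :=
      mul_pos (mul_pos hr' (by linarith)) (pow_pos (by linarith [hγ.2]) 2)
    unfold Pf; nlinarith [key]
  have hlog : Real.log (Pf r m₁ γ) < Real.log (Pf r m₂ γ) := Real.log_lt_log hP1 hPlt
  have hdiv : Real.log (Pf r m₂ γ) / Real.log γ < Real.log (Pf r m₁ γ) / Real.log γ :=
    div_lt_div_of_neg_of_lt hlogγ hlog
  rw [sEnv_eq, sEnv_eq]; linarith

lemma sEnv_tendsto_zero {r m : ℝ} (hr : 1 < r) (hm0 : 0 < m) (hm1 : m < 1) :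
    Tendsto (sEnv r m) (𝓝[>] (0:ℝ)) (𝓝 1) := by
  have hP0 : 0 < Pf r m 0 := Pf_pos hr hm0 hm1 le_rfl
  have hPc : Tendsto (fun γ => Real.log (Pf r m γ)) (𝓝[>] (0:ℝ))
      (𝓝 (Real.log (Pf r m 0))) := by
    have : ContinuousAt (fun γ => Real.log (Pf r m γ)) 0 :=
      (Real.continuousAt_log hP0.ne').comp (Pf_continuous r m).continuousAt
    exact this.tendsto.mono_left nhdsWithin_le_nhds
  have hinv : Tendsto (fun γ : ℝ => (Real.log γ)⁻¹) (𝓝[>] (0:ℝ)) (𝓝 0) := by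
    have h1 : Tendsto (fun γ : ℝ => -Real.log γ) (𝓝[>] (0:ℝ)) atTop :=
      tendsto_neg_atBot_atTop.comp Real.tendsto_log_nhdsGT_zero
    have h2 := h1.inv_tendsto_atTop
    have h3 := h2.neg
    simp only [Pi.inv_apply, neg_zero, inv_neg, neg_neg] at h3
    exact h3
  have hmul : Tendsto (fun γ => Real.log (Pf r m γ) * (Real.log γ)⁻¹) (𝓝[>] (0:ℝ))
      (𝓝 0) := by
    have := hPc.mul hinv
    simpa using this
  have : Tendsto (fun γ => 1 - Real.log (Pf r m γ) / Real.log γ) (𝓝[>] (0:ℝ)) (𝓝 1) := by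
    have := (tendsto_const_nhds : Tendsto (fun _ : ℝ => (1:ℝ)) (𝓝[>] (0:ℝ)) (𝓝 1)).sub hmul
    simp only [sub_zero] at this
    simpa [div_eq_mul_inv] using this
  exact this

lemma sEnv_tendsto_one {r m : ℝ} (hr : 1 < r) (hm0 : 0 < m) (hm1 : m < 1) :
    Tendsto (sEnv r m) (𝓝[<] (1:ℝ)) atTop := by
  have hP1 : Pf r m 1 = r := by unfold Pf; ring
  have hPc : Tendsto (fun γ => Real.log (Pf r m γ)) (𝓝[<] (1:ℝ)) (𝓝 (Real.log r)) := by
    have : ContinuousAt (fun γ => Real.log (Pf r m γ)) 1 := by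
      apply (Real.continuousAt_log ?_).comp (Pf_continuous r m).continuousAt
      rw [hP1]; exact (by linarith : (0:ℝ) < r).ne'
    have h : Tendsto (fun γ => Real.log (Pf r m γ)) (𝓝[<] (1:ℝ)) (𝓝 (Real.log (Pf r m 1))) :=
      this.tendsto.mono_left nhdsWithin_le_nhds
    rwa [hP1] at h
  have hIoo : Ioo (0:ℝ) 1 ∈ 𝓝[<] (1:ℝ) := Ioo_mem_nhdsLT_of_mem ⟨zero_lt_one, le_rfl⟩
  have hneglog : Tendsto (fun γ : ℝ => -Real.log γ) (𝓝[<] (1:ℝ)) (𝓝[>] (0:ℝ)) := by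
    rw [tendsto_nhdsWithin_iff]
    constructor
    · have : Tendsto Real.log (𝓝[<] (1:ℝ)) (𝓝 0) := by
        have := (Real.continuousAt_log one_ne_zero).tendsto
        rw [Real.log_one] at this
        exact this.mono_left nhdsWithin_le_nhds
      have h := this.neg
      rw [neg_zero] at h
      exact h
    · filter_upwards [hIoo] with γ hγ
      exact Set.mem_Ioi.mpr (by linarith [Real.log_neg hγ.1 hγ.2])
  have hinv : Tendsto (fun γ : ℝ => (Real.log γ)⁻¹) (𝓝[<] (1:ℝ)) atBot := by
    have h1 : Tendsto (fun γ : ℝ => (-Real.log γ)⁻¹) (𝓝[<] (1:ℝ)) atTop :=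
      tendsto_inv_nhdsGT_zero.comp hneglog
    have h2 : Tendsto (fun γ : ℝ => -(-Real.log γ)⁻¹) (𝓝[<] (1:ℝ)) atBot :=
      tendsto_neg_atTop_atBot.comp h1
    have : (fun γ : ℝ => -(-Real.log γ)⁻¹) = fun γ : ℝ => (Real.log γ)⁻¹ := by
      funext γ; rw [inv_neg, neg_neg]
    rwa [this] at h2
  have hmul : Tendsto (fun γ => Real.log (Pf r m γ) * (Real.log γ)⁻¹) (𝓝[<] (1:ℝ)) atBot :=
    hPc.pos_mul_atBot (Real.log_pos hr) hinv
  have hneg : Tendsto (fun γ => -(Real.log (Pf r m γ) * (Real.log γ)⁻¹)) (𝓝[<] (1:ℝ)) atTop :=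
    tendsto_neg_atBot_atTop.comp hmul
  have := tendsto_atTop_add_const_left (𝓝[<] (1:ℝ)) 1 hneg
  refine this.congr fun γ => ?_
  rw [sEnv_eq, div_eq_mul_inv]; ring

lemma exists_least_sEnv {r m : ℝ} (hr : 1 < r) (hm0 : 0 < m) (hm1 : m < 1) (hrm : r * m < 2) :
    ∃ s, IsLeast ((fun γ => sEnv r m γ) '' Ioo (0:ℝ) 1) s := by
  have hr' : (0:ℝ) < r := by linarith
  set γ₀ : ℝ := (2 - r * m) / (4 * r) with hγ₀def
  have hγ₀pos : 0 < γ₀ := div_pos (by linarith) (by linarith)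
  have hγ₀lt : γ₀ < 1 := by
    rw [div_lt_one (by linarith)]
    nlinarith [mul_pos hr' hm0]
  have hγ₀mem : γ₀ ∈ Ioo (0:ℝ) 1 := ⟨hγ₀pos, hγ₀lt⟩
  have hrγ₀ : 4 * r * γ₀ = 2 - r * m := by
    rw [hγ₀def]; field_simp
  have hPlt1 : Pf r m γ₀ < 1 := by
    unfold Pf
    nlinarith [mul_pos (mul_pos hr' hm0) hγ₀pos,
      mul_pos (mul_pos (mul_pos hr' hm0) hγ₀pos) hγ₀pos, hγ₀lt, hrγ₀,
      mul_pos hr' hm0]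
  have hPpos : 0 < Pf r m γ₀ := Pf_pos hr hm0 hm1 hγ₀pos.le
  have hs₀ : sEnv r m γ₀ < 1 := by
    have h1 : Real.log (Pf r m γ₀) < 0 := Real.log_neg hPpos hPlt1
    have h2 : Real.log γ₀ < 0 := Real.log_neg hγ₀pos hγ₀lt
    have : 0 < Real.log (Pf r m γ₀) / Real.log γ₀ := div_pos_of_neg_of_neg h1 h2
    rw [sEnv_eq]; linarith
  have e0 : ∀ᶠ γ in 𝓝[>] (0:ℝ), sEnv r m γ₀ < sEnv r m γ :=
    (sEnv_tendsto_zero hr hm0 hm1).eventually (eventually_gt_nhds hs₀)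
  have e1 : ∀ᶠ γ in 𝓝[<] (1:ℝ), sEnv r m γ₀ < sEnv r m γ :=
    (sEnv_tendsto_one hr hm0 hm1).eventually (eventually_gt_atTop _)
  obtain ⟨u, hu, hu'⟩ := mem_nhdsGT_iff_exists_Ioo_subset.mp e0
  obtain ⟨l, hl, hl'⟩ := mem_nhdsLT_iff_exists_Ioo_subset.mp e1
  have hu0 : 0 < u := hu
  have hl1 : l < 1 := hl
  have huγ₀ : u ≤ γ₀ := by
    by_contra h
    have hmem := hu' ⟨hγ₀pos, not_le.mp h⟩
    simp only [Set.mem_setOf_eq] at hmem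
    exact lt_irrefl _ hmem
  have hγ₀l : γ₀ ≤ l := by
    by_contra h
    have hmem := hl' ⟨not_le.mp h, hγ₀lt⟩
    simp only [Set.mem_setOf_eq] at hmem
    exact lt_irrefl _ hmem
  have hKsub : Icc u l ⊆ Ioo (0:ℝ) 1 :=
    fun x hx => ⟨lt_of_lt_of_le hu0 hx.1, lt_of_le_of_lt hx.2 hl1⟩
  have hKne : γ₀ ∈ Icc u l := ⟨huγ₀, hγ₀l⟩
  obtain ⟨x₀, hx₀K, hx₀min⟩ := (isCompact_Icc).exists_isMinOn ⟨γ₀, hKne⟩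
    ((sEnv_continuousOn hr hm0 hm1).mono hKsub)
  refine ⟨sEnv r m x₀, ⟨x₀, hKsub hx₀K, rfl⟩, ?_⟩
  rintro y ⟨γ, hγ, rfl⟩
  by_cases hcase1 : γ < u
  · have h1 : sEnv r m γ₀ < sEnv r m γ := hu' ⟨hγ.1, hcase1⟩
    have h2 : sEnv r m x₀ ≤ sEnv r m γ₀ := hx₀min hKne
    linarith
  · by_cases hcase2 : l < γ
    · have h1 : sEnv r m γ₀ < sEnv r m γ := hl' ⟨hcase2, hγ.2⟩
      have h2 : sEnv r m x₀ ≤ sEnv r m γ₀ := hx₀min hKne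
      linarith
    · exact hx₀min ⟨not_lt.mp hcase1, not_lt.mp hcase2⟩

theorem stmt_4 (r m₁ m₂ : ℝ) (hr : 1 < r) (hm₁ : 0 < m₁) (hm₁₂ : m₁ < m₂) (hm₂ : m₂ < 1)
    (hrm₂ : r * m₂ < 2) :
    ∃ s₁ s₂ : ℝ,
      IsLeast ((fun γ => sEnv r m₁ γ) '' Set.Ioo (0 : ℝ) 1) s₁ ∧
      IsLeast ((fun γ => sEnv r m₂ γ) '' Set.Ioo (0 : ℝ) 1) s₂ ∧
      s₁ < s₂ := by
  have hr' : (0:ℝ) < r := by linarith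
  have hrm₁ : r * m₁ < 2 := by nlinarith
  obtain ⟨s₁, hs₁⟩ := exists_least_sEnv hr hm₁ (by linarith) hrm₁
  obtain ⟨s₂, hs₂⟩ := exists_least_sEnv hr (by linarith : 0 < m₂) hm₂ hrm₂
  refine ⟨s₁, s₂, hs₁, hs₂, ?_⟩
  obtain ⟨γ₂, hγ₂, hγ₂eq⟩ := hs₂.1
  have h1 : s₁ ≤ sEnv r m₁ γ₂ := hs₁.2 ⟨γ₂, hγ₂, rfl⟩
  have h2 : sEnv r m₁ γ₂ < sEnv r m₂ γ₂ := sEnv_strictMono hr hm₁ hm₁₂ hm₂ hγ₂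
  rw [← hγ₂eq]
  linarith
end

section
/- Let r > 0 and γ ∈ (0,1) be fixed. Then the function m ↦ 1 - log(r*m/2 + r*(1-m)*γ + (r*m/2)*γ^2)/log(γ) is strictly increasing on the interval (0,1). -/
theorem stmt_5 (r γ : ℝ) (hr : 0 < r) (hγ : γ ∈ Set.Ioo (0 : ℝ) 1) :
    StrictMonoOn
      (fun m : ℝ =>
        1 - Real.log (r * m / 2 + r * (1 - m) * γ + r * m / 2 * γ ^ 2) / Real.log γ)
      (Set.Ioo (0 : ℝ) 1) := by
  obtain ⟨hγ0, hγ1⟩ := hγ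
  have hlogγ : Real.log γ < 0 := Real.log_neg hγ0 hγ1
  intro x hx y hy hxy
  obtain ⟨hx0, hx1⟩ := hx
  obtain ⟨hy0, hy1⟩ := hy
  have hAx : 0 < r * x / 2 + r * (1 - x) * γ + r * x / 2 * γ ^ 2 := by
    nlinarith [mul_pos hr hx0, mul_pos (mul_pos hr (sub_pos.2 hx1)) hγ0,
      sq_nonneg γ, mul_pos hr hγ0]
  have hlt : r * x / 2 + r * (1 - x) * γ + r * x / 2 * γ ^ 2
      < r * y / 2 + r * (1 - y) * γ + r * y / 2 * γ ^ 2 := by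
    nlinarith [mul_pos (mul_pos hr (sub_pos.2 hxy)) (pow_pos (sub_pos.2 hγ1) 2)]
  have hlog := Real.log_lt_log hAx hlt
  have hdiv : Real.log (r * y / 2 + r * (1 - y) * γ + r * y / 2 * γ ^ 2) / Real.log γ
      < Real.log (r * x / 2 + r * (1 - x) * γ + r * x / 2 * γ ^ 2) / Real.log γ := by
    exact div_lt_div_of_neg_of_lt hlogγ hlog
  simp only
  linarith
end

section
/- The complex polynomial X^{q-p} - (a + b*X + a*X^2)^q has exactly q - p roots, counted with multiplicity, in the closed disk {z ∈ ℂ : |z| ≤ γ_s}. -/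
open Polynomial Metric

noncomputable section Stmt6Aux

/-- Logarithmic derivative identity for a fully factored polynomial. -/
lemma stmt6_eval_derivative_factored (M : Multiset ℂ) (k : ℂ) :
    ∀ z : ℂ, (∀ r ∈ M, z ≠ r) →
      eval z (derivative (C k * (M.map fun r => X - C r).prod)) =
        eval z (C k * (M.map fun r => X - C r).prod) * (M.map fun r => (z - r)⁻¹).sum := by
  induction M using Multiset.induction with
  | empty => simp
  | cons r M ih =>
    intro z hz
    have hzr : z - r ≠ 0 := sub_ne_zero.mpr (hz r (Multiset.mem_cons_self r M))
    have ih' := ih z (fun s hs => hz s (Multiset.mem_cons_of_mem hs))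
    simp only [Multiset.map_cons, Multiset.prod_cons, Multiset.sum_cons]
    rw [show C k * ((X - C r) * (M.map fun s => X - C s).prod)
        = (X - C r) * (C k * (M.map fun s => X - C s).prod) by ring]
    rw [derivative_mul]
    simp only [derivative_sub, derivative_X, derivative_C, sub_zero, one_mul, eval_add,
      eval_mul, eval_sub, eval_X, eval_C]
    rw [ih']
    field_simp
    simp only [eval_mul, eval_C]
    ring

lemma stmt6_continuousOn_inv_sum (M : Multiset ℂ) (s : Set ℂ) (h : ∀ r ∈ M, ∀ z ∈ s, z ≠ r) :
    ContinuousOn (fun z => (M.map fun r => (z - r)⁻¹).sum) s := by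
  induction M using Multiset.induction with
  | empty => simpa using continuousOn_const
  | cons r M ih =>
    simp only [Multiset.map_cons, Multiset.sum_cons]
    refine ContinuousOn.add (ContinuousOn.inv₀ (continuousOn_id.sub continuousOn_const) ?_)
      (ih fun t ht z hz => h t (Multiset.mem_cons_of_mem ht) z hz)
    exact fun z hz => sub_ne_zero.mpr (h r (Multiset.mem_cons_self r M) z hz)

lemma stmt6_circleIntegral_add {f g : ℂ → ℂ} {c : ℂ} {R : ℝ} (hf : CircleIntegrable f c R)
    (hg : CircleIntegrable g c R) :
    (∮ z in C(c, R), (f z + g z)) = (∮ z in C(c, R), f z) + ∮ z in C(c, R), g z := by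
  simp only [circleIntegral]
  rw [← intervalIntegral.integral_add ((circleIntegrable_iff R).mp hf)
    ((circleIntegrable_iff R).mp hg)]
  simp only [smul_add]

lemma stmt6_integral_inv_of_outside {ρ : ℝ} (hρ : 0 < ρ) {w : ℂ} (hw : ρ < ‖w‖) :
    (∮ z in C(0, ρ), (z - w)⁻¹) = 0 := by
  have hne : ∀ z ∈ closedBall (0 : ℂ) ρ, z - w ≠ 0 := by
    intro z hz
    refine sub_ne_zero.mpr fun hzw => ?_
    rw [mem_closedBall, Complex.dist_eq, sub_zero] at hz
    rw [hzw] at hz; exact absurd hz (not_le.mpr hw)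
  refine Complex.circleIntegral_eq_zero_of_differentiable_on_off_countable hρ.le
    Set.countable_empty ?_ ?_
  · exact ContinuousOn.inv₀ (continuousOn_id.sub continuousOn_const) hne
  · intro z hz
    exact ((differentiableAt_id.sub_const w).inv
      (hne z (ball_subset_closedBall hz.1)))

noncomputable section

lemma stmt6_sphere_ne {ρ : ℝ} {r z : ℂ} (hr : ‖r‖ ≠ ρ) (hz : z ∈ sphere (0:ℂ) ρ) :
    z ≠ r := by
  intro h
  rw [mem_sphere_zero_iff_norm, h] at hz
  exact hr hz

lemma stmt6_integral_inv_sum {ρ : ℝ} (hρ : 0 < ρ) (M : Multiset ℂ)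
    (h : ∀ r ∈ M, ‖r‖ ≠ ρ) :
    (∮ z in C(0, ρ), (M.map fun r => (z - r)⁻¹).sum) =
      2 * Real.pi * Complex.I *
        (Multiset.card (M.filter fun r => ‖r‖ < ρ) : ℂ) := by
  classical
  induction M using Multiset.induction with
  | empty => simp [circleIntegral]
  | cons r M ih =>
    have hr : ‖r‖ ≠ ρ := h r (Multiset.mem_cons_self r M)
    have hM : ∀ s ∈ M, ‖s‖ ≠ ρ := fun s hs => h s (Multiset.mem_cons_of_mem hs)
    have h1 : CircleIntegrable (fun z => (z - r)⁻¹) 0 ρ := by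
      refine ContinuousOn.circleIntegrable hρ.le
        (ContinuousOn.inv₀ (continuousOn_id.sub continuousOn_const) ?_)
      exact fun z hz => sub_ne_zero.mpr (stmt6_sphere_ne hr hz)
    have h2 : CircleIntegrable (fun z => (M.map fun s => (z - s)⁻¹).sum) 0 ρ := by
      refine ContinuousOn.circleIntegrable hρ.le
        (stmt6_continuousOn_inv_sum M _ ?_)
      exact fun s hs z hz => stmt6_sphere_ne (hM s hs) hz
    simp only [Multiset.map_cons, Multiset.sum_cons]
    rw [stmt6_circleIntegral_add h1 h2, ih hM]
    rcases lt_or_gt_of_ne hr with hlt | hgt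
    · rw [circleIntegral.integral_sub_inv_of_mem_ball (by simpa [Complex.dist_eq] using hlt)]
      rw [show (Multiset.filter (fun s => ‖s‖ < ρ) (r ::ₘ M))
          = r ::ₘ Multiset.filter (fun s => ‖s‖ < ρ) M from
        Multiset.filter_cons_of_pos _ hlt, Multiset.card_cons]
      push_cast
      ring
    · rw [stmt6_integral_inv_of_outside hρ hgt]
      rw [show (Multiset.filter (fun s => ‖s‖ < ρ) (r ::ₘ M))
          = Multiset.filter (fun s => ‖s‖ < ρ) M from
        Multiset.filter_cons_of_neg _ (not_lt.mpr hgt.le)]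
      ring

/-- Argument principle for polynomials on a circle centered at the origin. -/
lemma stmt6_argument_principle (f : ℂ[X]) {ρ : ℝ} (hρ : 0 < ρ)
    (hsph : ∀ z : ℂ, ‖z‖ = ρ → eval z f ≠ 0) :
    (∮ z in C(0, ρ), eval z (derivative f) / eval z f) =
      2 * Real.pi * Complex.I *
        (Multiset.card (f.roots.filter fun z => ‖z‖ < ρ) : ℂ) := by
  classical
  have hsplit : f.roots.card = f.natDegree :=
    (splits_iff_card_roots).mp (IsAlgClosed.splits f)
  have hfact := C_leadingCoeff_mul_prod_multiset_X_sub_C hsplit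
  have hroots : ∀ r ∈ f.roots, ‖r‖ ≠ ρ := by
    intro r hr habs
    exact hsph r habs ((isRoot_of_mem_roots hr))
  have heq : Set.EqOn (fun z => eval z (derivative f) / eval z f)
      (fun z => (f.roots.map fun r => (z - r)⁻¹).sum) (sphere 0 ρ) := by
    intro z hz
    have hzρ : ‖z‖ = ρ := by rwa [mem_sphere_zero_iff_norm] at hz
    have hne : eval z f ≠ 0 := hsph z hzρ
    have hkey := stmt6_eval_derivative_factored f.roots f.leadingCoeff z
      (fun r hr => stmt6_sphere_ne (hroots r hr) hz)
    rw [hfact] at hkey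
    simp only
    rw [hkey, mul_div_cancel_left₀ _ hne]
  rw [circleIntegral.integral_congr hρ.le heq]
  exact stmt6_integral_inv_sum hρ f.roots hroots

/-- On `(γs, γw)` between the two solutions, `Q(γ)^q < γ^n` strictly. -/
lemma stmt6_key_ineq {a b : ℝ} (ha : 0 < a) (hb : 0 < b) {n q : ℕ} (hq : 0 < q)
    {γs γw : ℝ} (h0s : 0 < γs) (hsw : γs < γw)
    (heqs : (a + b * γs + a * γs ^ 2) ^ q = γs ^ n)
    (heqw : (a + b * γw + a * γw ^ 2) ^ q = γw ^ n)
    {γ : ℝ} (hγ1 : γs < γ) (hγ2 : γ < γw) :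
    (a + b * γ + a * γ ^ 2) ^ q < γ ^ n := by
  set Q : ℝ → ℝ := fun x => a + b * x + a * x ^ 2 with hQ
  have hQpos : ∀ x : ℝ, 0 < x → 0 < Q x := by intro x hx; simp only [hQ]; positivity
  set F : ℝ → ℝ := fun t => q * Real.log (Q (Real.exp t)) - n * t with hF
  -- derivative of F
  have hder : ∀ t : ℝ, HasDerivAt F
      ((q : ℝ) * ((b * Real.exp t + 2 * a * Real.exp t ^ 2) / Q (Real.exp t)) - n) t := by
    intro t
    have hexp : HasDerivAt Real.exp (Real.exp t) t := Real.hasDerivAt_exp t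
    have h1 : HasDerivAt (fun t => Q (Real.exp t))
        (b * Real.exp t + 2 * a * Real.exp t ^ 2) t := by
      have hb' : HasDerivAt (fun t => b * Real.exp t) (b * Real.exp t) t := hexp.const_mul b
      have hc' : HasDerivAt (fun t => a * Real.exp t ^ 2) (a * (2 * Real.exp t ^ 1 * Real.exp t)) t :=
        (hexp.pow 2).const_mul a
      have := ((hasDerivAt_const t a).add hb').add hc'
      exact this.congr_deriv (by ring)
    have hlog : HasDerivAt (fun t => Real.log (Q (Real.exp t)))
        ((b * Real.exp t + 2 * a * Real.exp t ^ 2) / Q (Real.exp t)) t :=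
      h1.log (ne_of_gt (hQpos _ (Real.exp_pos t)))
    have := (hlog.const_mul (q : ℝ)).sub (((hasDerivAt_id t).const_mul (n : ℝ)))
    exact this.congr_deriv (by ring)
  have hdF : deriv F = fun t =>
      (q : ℝ) * ((b * Real.exp t + 2 * a * Real.exp t ^ 2) / Q (Real.exp t)) - n :=
    funext fun t => (hder t).deriv
  -- strict monotonicity of deriv F
  have hmono : StrictMono (deriv F) := by
    rw [hdF]
    intro s t hst
    have hx : (0:ℝ) < Real.exp s := Real.exp_pos s
    have hy : (0:ℝ) < Real.exp t := Real.exp_pos t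
    have hxy : Real.exp s < Real.exp t := Real.exp_lt_exp.mpr hst
    set x := Real.exp s
    set y := Real.exp t
    have hu : (b * x + 2 * a * x ^ 2) / Q x < (b * y + 2 * a * y ^ 2) / Q y := by
      rw [div_lt_div_iff₀ (hQpos x hx) (hQpos y hy)]
      have key : (b * y + 2 * a * y ^ 2) * Q x - (b * x + 2 * a * x ^ 2) * Q y
          = (y - x) * (a * b + a * b * (x * y) + 2 * a ^ 2 * (x + y)) := by
        simp only [hQ]; ring
      nlinarith [mul_pos (sub_pos.mpr hxy) (by positivity : (0:ℝ) < a * b + a * b * (x * y) + 2 * a ^ 2 * (x + y))]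
    have hq' : (0:ℝ) < (q : ℝ) := by exact_mod_cast hq
    have := mul_lt_mul_of_pos_left hu hq'
    linarith
  -- continuity of F
  have hFcont : Continuous F := by
    apply Continuous.sub
    · apply Continuous.mul continuous_const
      apply Continuous.log
      · exact (continuous_const.add (continuous_const.mul Real.continuous_exp)).add
          (continuous_const.mul (Real.continuous_exp.pow 2))
      · exact fun t => ne_of_gt (hQpos _ (Real.exp_pos t))
    · exact continuous_const.mul continuous_id
  have hconv : StrictConvexOn ℝ Set.univ F := hmono.strictConvexOn_univ_of_deriv hFcont
  -- endpoint values
  have hFval : ∀ x : ℝ, 0 < x → F (Real.log x) = Real.log (Q x ^ q) - Real.log (x ^ n) := by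
    intro x hx
    simp only [hF, Real.exp_log hx, Real.log_pow]
  have h0w : (0:ℝ) < γw := h0s.trans hsw
  have hFs : F (Real.log γs) = 0 := by rw [hFval γs h0s]; rw [show Q γs = a + b * γs + a * γs ^ 2 from rfl, heqs]; ring
  have hFw : F (Real.log γw) = 0 := by rw [hFval γw h0w]; rw [show Q γw = a + b * γw + a * γw ^ 2 from rfl, heqw]; ring
  -- the point log γ is a strict convex combination
  have h0γ : (0:ℝ) < γ := h0s.trans hγ1
  set ts := Real.log γs
  set tw := Real.log γw
  set t := Real.log γ
  have hts : ts < t := Real.log_lt_log h0s hγ1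
  have htw : t < tw := Real.log_lt_log h0γ hγ2
  have hstw : ts < tw := hts.trans htw
  set lam := (tw - t) / (tw - ts) with hlam
  have hlam0 : 0 < lam := div_pos (by linarith) (by linarith)
  have hlam1 : 0 < 1 - lam := by
    have : lam < 1 := (div_lt_one (by linarith)).mpr (by linarith)
    linarith
  have hcomb : lam • ts + (1 - lam) • tw = t := by
    have hne : tw - ts ≠ 0 := ne_of_gt (by linarith)
    have hmul : lam * (tw - ts) = tw - t := by rw [hlam]; field_simp
    simp only [smul_eq_mul]
    linear_combination (-1 : ℝ) * hmul
  have hFt : F t < 0 := by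
    have := hconv.2 (Set.mem_univ ts) (Set.mem_univ tw) (ne_of_lt hstw) hlam0 hlam1 (by ring)
    rw [hcomb] at this
    simp only [smul_eq_mul] at this
    rw [hFs, hFw] at this
    linarith
  -- conclude
  rw [hFval γ h0γ] at hFt
  have hlt : Real.log ((a + b * γ + a * γ ^ 2) ^ q) < Real.log (γ ^ n) := by
    simp only [hQ] at hFt; linarith
  have hQγ : (0:ℝ) < (a + b * γ + a * γ ^ 2) ^ q := by positivity
  calc (a + b * γ + a * γ ^ 2) ^ q
      = Real.exp (Real.log ((a + b * γ + a * γ ^ 2) ^ q)) := (Real.exp_log hQγ).symm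
    _ < Real.exp (Real.log (γ ^ n)) := Real.exp_lt_exp.mpr hlt
    _ = γ ^ n := Real.exp_log (by positivity)

end

set_option maxHeartbeats 1000000 in
theorem stmt_6 (r m : ℝ) (hm0 : 0 < m) (hm1 : m < 1) (hr1 : 1 < r) (hr2 : r < 2 / m)
    (a b : ℝ) (ha : a = r * m / 2) (hb : b = r * (1 - m))
    (p q : ℕ) (hp : 0 < p) (hpq : p < q)
    (γs γw : ℝ) (hγs : γs ∈ Set.Ioo (0 : ℝ) 1) (hγw : γw ∈ Set.Ioo (0 : ℝ) 1)
    (hsw : γs < γw)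
    (heqs : (a + b * γs + a * γs ^ 2) ^ q = γs ^ (q - p))
    (heqw : (a + b * γw + a * γw ^ 2) ^ q = γw ^ (q - p)) :
    Multiset.card
      (((X ^ (q - p) -
          (C (a : ℂ) + C (b : ℂ) * X + C (a : ℂ) * X ^ 2) ^ q).roots).filter
        (fun z => ‖z‖ ≤ γs)) = q - p := by
  classical
  obtain ⟨h0s, h1s⟩ := hγs
  obtain ⟨h0w, h1w⟩ := hγw
  have ha0 : 0 < a := by rw [ha]; nlinarith
  have hb0 : 0 < b := by rw [hb]; nlinarith
  set n := q - p with hn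
  have hn0 : 0 < n := Nat.sub_pos_of_lt hpq
  have hq0 : 0 < q := hp.trans hpq
  set ρ := (γs + γw) / 2 with hρdef
  have hρ1 : γs < ρ := by rw [hρdef]; linarith
  have hρ2 : ρ < γw := by rw [hρdef]; linarith
  have hρ0 : 0 < ρ := h0s.trans hρ1
  have hkey : ∀ γ : ℝ, γs < γ → γ < γw → (a + b * γ + a * γ ^ 2) ^ q < γ ^ n :=
    fun γ h1 h2 => stmt6_key_ineq ha0 hb0 hq0 h0s hsw heqs heqw h1 h2
  set Qc : ℂ[X] := C (a : ℂ) + C (b : ℂ) * X + C (a : ℂ) * X ^ 2 with hQc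
  have hQabs : ∀ z : ℂ, ‖eval z (Qc ^ q)‖
      ≤ (a + b * ‖z‖ + a * (‖z‖) ^ 2) ^ q := by
    intro z
    rw [eval_pow, norm_pow]
    refine pow_le_pow_left₀ (norm_nonneg _) ?_ q
    have h1 : ‖(a : ℂ) + (b : ℂ) * z + (a : ℂ) * z ^ 2‖
        ≤ ‖(a : ℂ)‖ + ‖(b : ℂ) * z‖ + ‖(a : ℂ) * z ^ 2‖ :=
      le_trans (norm_add_le _ _) (add_le_add_left (norm_add_le _ _) _)
    simp only [hQc, eval_add, eval_mul, eval_pow, eval_C, eval_X]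
    simpa [map_mul, map_pow, Complex.norm_real, abs_of_pos ha0, abs_of_pos hb0] using h1
  -- the homotopy family
  set σ : ℝ → ℝ := fun t => max 0 (min 1 t) with hσ
  have hσ0 : σ 0 = 0 := by norm_num [hσ]
  have hσ1 : σ 1 = 1 := by norm_num [hσ]
  have hσmem : ∀ t, 0 ≤ σ t ∧ σ t ≤ 1 := fun t =>
    ⟨le_max_left _ _, max_le zero_le_one (min_le_left _ _)⟩
  have hσcont : Continuous σ := continuous_const.max (continuous_const.min continuous_id)
  set Fp : ℝ → ℂ[X] := fun t => X ^ n - C ((σ t : ℝ) : ℂ) * Qc ^ q with hFp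
  have hsph : ∀ t : ℝ, ∀ z : ℂ, ‖z‖ = ρ → eval z (Fp t) ≠ 0 := by
    intro t z hz h0
    have heq : (z : ℂ) ^ n = ((σ t : ℝ) : ℂ) * eval z (Qc ^ q) := by
      have h0' : eval z (X ^ n - C ((σ t : ℝ) : ℂ) * Qc ^ q) = 0 := h0
      simp only [eval_sub, eval_pow, eval_X, eval_mul, eval_C] at h0'
      rw [← sub_eq_zero]
      simpa [eval_pow] using h0'
    have habs : ρ ^ n = σ t * ‖eval z (Qc ^ q)‖ := by
      have := congrArg norm heq
      simpa [map_mul, map_pow, hz, Complex.norm_real, abs_of_nonneg (hσmem t).1] using this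
    have hle : ‖eval z (Qc ^ q)‖ ≤ (a + b * ρ + a * ρ ^ 2) ^ q := by
      simpa [hz] using hQabs z
    have hlt : (a + b * ρ + a * ρ ^ 2) ^ q < ρ ^ n := hkey ρ hρ1 hρ2
    nlinarith [(hσmem t).1, (hσmem t).2, norm_nonneg (eval z (Qc ^ q))]
  have habsρ : ‖(ρ : ℂ)‖ = ρ := by
    exact Complex.norm_of_nonneg hρ0.le
  have hFpne : ∀ t : ℝ, Fp t ≠ 0 := by
    intro t h0
    have := hsph t (ρ : ℂ) habsρ
    rw [h0] at this
    simp at this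
  set φ : ℝ → ℂ := fun t => ∮ z in C(0, ρ), eval z (derivative (Fp t)) / eval z (Fp t) with hφ
  have hφval : ∀ t : ℝ, φ t = 2 * Real.pi * Complex.I *
      (Multiset.card ((Fp t).roots.filter fun z => ‖z‖ < ρ) : ℂ) :=
    fun t => stmt6_argument_principle (Fp t) hρ0 (hsph t)
  -- continuity of φ
  have hφeq : ∀ t, φ t = ∫ θ in (0:ℝ)..(2 * Real.pi), (circleMap 0 ρ θ * Complex.I) *
      (eval (circleMap 0 ρ θ) (derivative (Fp t)) / eval (circleMap 0 ρ θ) (Fp t)) := by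
    intro t
    simp only [hφ, circleIntegral, deriv_circleMap, smul_eq_mul]
  have hev : ∀ pp : ℂ[X], Continuous fun s : ℝ × ℝ => eval (circleMap 0 ρ s.2) pp := fun pp =>
    (pp.continuous).comp ((continuous_circleMap 0 ρ).comp continuous_snd)
  have hcσ : Continuous fun s : ℝ × ℝ => ((σ s.1 : ℝ) : ℂ) :=
    Complex.continuous_ofReal.comp (hσcont.comp continuous_fst)
  have hden : Continuous fun s : ℝ × ℝ => eval (circleMap 0 ρ s.2) (Fp s.1) := by
    simp only [hFp, eval_sub, eval_mul, eval_C]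
    exact (hev (X ^ n)).sub (hcσ.mul (hev (Qc ^ q)))
  have hnum : Continuous fun s : ℝ × ℝ => eval (circleMap 0 ρ s.2) (derivative (Fp s.1)) := by
    simp only [hFp, derivative_sub, derivative_C_mul, eval_sub, eval_mul, eval_C]
    exact (hev (derivative (X ^ n))).sub (hcσ.mul (hev (derivative (Qc ^ q))))
  have hden0 : ∀ s : ℝ × ℝ, eval (circleMap 0 ρ s.2) (Fp s.1) ≠ 0 := fun s =>
    hsph s.1 _ (by simp [norm_circleMap_zero, abs_of_pos hρ0])
  have hG : Continuous (Function.uncurry fun (t θ : ℝ) => (circleMap 0 ρ θ * Complex.I) *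
      (eval (circleMap 0 ρ θ) (derivative (Fp t)) / eval (circleMap 0 ρ θ) (Fp t))) := by
    show Continuous fun s : ℝ × ℝ => (circleMap 0 ρ s.2 * Complex.I) *
      (eval (circleMap 0 ρ s.2) (derivative (Fp s.1)) / eval (circleMap 0 ρ s.2) (Fp s.1))
    exact (((continuous_circleMap 0 ρ).comp continuous_snd).mul continuous_const).mul
      (hnum.div hden hden0)
  have hφcont : Continuous φ := by
    rw [show φ = fun t => ∫ θ in (0:ℝ)..(2 * Real.pi), (circleMap 0 ρ θ * Complex.I) *
      (eval (circleMap 0 ρ θ) (derivative (Fp t)) / eval (circleMap 0 ρ θ) (Fp t))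
      from funext hφeq]
    exact intervalIntegral.continuous_parametric_intervalIntegral_of_continuous' hG 0 (2 * Real.pi)
  -- ψ = imaginary part
  set ψ : ℝ → ℝ := fun t => (φ t).im with hψ
  have hψcont : Continuous ψ := Complex.continuous_im.comp hφcont
  have hψval : ∀ t, ψ t = 2 * Real.pi *
      (Multiset.card ((Fp t).roots.filter fun z => ‖z‖ < ρ) : ℝ) := by
    intro t
    rw [hψ]
    simp only [hφval t]
    simp [Complex.mul_im, Complex.mul_re]
  -- endpoint values
  have hFp0 : Fp 0 = X ^ n := by simp [hFp, hσ0]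
  have hFp1 : Fp 1 = X ^ n - Qc ^ q := by simp [hFp, hσ1]
  have hcount0 : Multiset.card ((Fp 0).roots.filter fun z => ‖z‖ < ρ) = n := by
    rw [hFp0]
    rw [show ((X : ℂ[X]) ^ n).roots = n • ({0} : Multiset ℂ) by
      rw [Polynomial.roots_pow, Polynomial.roots_X]]
    rw [Multiset.nsmul_singleton]
    rw [Multiset.filter_eq_self.mpr]
    · exact Multiset.card_replicate n 0
    · intro z hz
      rw [Multiset.eq_of_mem_replicate hz]
      simpa using hρ0
  set N1 := Multiset.card ((Fp 1).roots.filter fun z => ‖z‖ < ρ) with hN1def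
  have hπ : (0:ℝ) < Real.pi := Real.pi_pos
  have hN1 : N1 = n := by
    by_contra hne
    rcases lt_or_gt_of_ne hne with hlt | hgt
    · -- N1 < n : value between ψ 1 and ψ 0
      have hv : 2 * Real.pi * ((N1 : ℝ) + 1/2) ∈ Set.Icc (ψ 1) (ψ 0) := by
        rw [hψval 0, hψval 1, hcount0, ← hN1def]
        constructor
        · nlinarith
        · have : (N1 : ℝ) + 1 ≤ n := by exact_mod_cast hlt
          nlinarith
      obtain ⟨t, ht, hψt⟩ := intermediate_value_Icc' zero_le_one hψcont.continuousOn hv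
      rw [hψval t] at hψt
      set K := Multiset.card ((Fp t).roots.filter fun z => ‖z‖ < ρ)
      have hK : (K : ℝ) = (N1 : ℝ) + 1/2 := by
        have h2π : (2 * Real.pi) ≠ 0 := by positivity
        field_simp at hψt
        nlinarith [hψt]
      rcases Nat.lt_or_ge K (N1 + 1) with h | h
      · have : (K : ℝ) ≤ N1 := by exact_mod_cast Nat.lt_succ_iff.mp h
        linarith
      · have : (N1 : ℝ) + 1 ≤ K := by exact_mod_cast h
        linarith
    · have hv : 2 * Real.pi * ((n : ℝ) + 1/2) ∈ Set.Icc (ψ 0) (ψ 1) := by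
        rw [hψval 0, hψval 1, hcount0, ← hN1def]
        constructor
        · nlinarith
        · have : (n : ℝ) + 1 ≤ N1 := by exact_mod_cast hgt
          nlinarith
      obtain ⟨t, ht, hψt⟩ := intermediate_value_Icc zero_le_one hψcont.continuousOn hv
      rw [hψval t] at hψt
      set K := Multiset.card ((Fp t).roots.filter fun z => ‖z‖ < ρ)
      have hK : (K : ℝ) = (n : ℝ) + 1/2 := by
        have h2π : (2 * Real.pi) ≠ 0 := by positivity
        field_simp at hψt
        nlinarith [hψt]
      rcases Nat.lt_or_ge K (n + 1) with h | h
      · have : (K : ℝ) ≤ n := by exact_mod_cast Nat.lt_succ_iff.mp h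
        linarith
      · have : (n : ℝ) + 1 ≤ K := by exact_mod_cast h
        linarith
  -- final filter comparison
  have hfilter : ∀ z ∈ (Fp 1).roots, (‖z‖ ≤ γs ↔ ‖z‖ < ρ) := by
    intro z hz
    constructor
    · intro h; exact lt_of_le_of_lt h hρ1
    · intro h
      by_contra hgt
      push_neg at hgt
      have hroot : eval z (Fp 1) = 0 := isRoot_of_mem_roots hz
      rw [hFp1] at hroot
      simp only [eval_sub, eval_pow, eval_X] at hroot
      have heq : z ^ n = eval z (Qc ^ q) := by
        rw [← sub_eq_zero]; simpa [eval_pow] using hroot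
      have habs : (‖z‖) ^ n = ‖eval z (Qc ^ q)‖ := by
        rw [← norm_pow, heq]
      have hle := hQabs z
      have hlt := hkey (‖z‖) hgt (h.trans hρ2)
      linarith [habs ▸ hle]
  have hfinal : Multiset.filter (fun z => ‖z‖ ≤ γs) ((Fp 1).roots)
      = Multiset.filter (fun z => ‖z‖ < ρ) ((Fp 1).roots) :=
    Multiset.filter_congr hfilter
  rw [← hFp1]
  rw [hfinal]
  exact hN1
end Stmt6Aux
end

section
/- Let γ1 ∈ (0,1) and let γ2 be a real number with -γ1 < γ2 < 0. Let ζ1 > 0 and ζ2 < 0 be the real numbers with ζ1^3 = 1/γ1 and ζ2^3 = 1/γ2. Define k1 = (ζ2 - 1)/(ζ2 - ζ1) and k2 = (1 - ζ1)/(ζ2 - ζ1). Then k1 + k2 = 1, k1 > k2 > 0, and k1*γ1^i + k2*γ2^i > 0 for every integer i ≥ 1. -/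
theorem stmt_14 (γ1 γ2 ζ1 ζ2 : ℝ)
    (hγ1 : γ1 ∈ Set.Ioo (0 : ℝ) 1) (hγ2l : -γ1 < γ2) (hγ2r : γ2 < 0)
    (hζ1pos : 0 < ζ1) (hζ1 : ζ1 ^ 3 = 1 / γ1)
    (hζ2neg : ζ2 < 0) (hζ2 : ζ2 ^ 3 = 1 / γ2)
    (k1 k2 : ℝ) (hk1 : k1 = (ζ2 - 1) / (ζ2 - ζ1)) (hk2 : k2 = (1 - ζ1) / (ζ2 - ζ1)) :
    k1 + k2 = 1 ∧ k2 < k1 ∧ 0 < k2 ∧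
      ∀ i : ℤ, 1 ≤ i → 0 < k1 * γ1 ^ i + k2 * γ2 ^ i := by
  obtain ⟨hγ1p, hγ1l⟩ := hγ1
  have hγ1ne : γ1 ≠ 0 := ne_of_gt hγ1p
  have hγ2ne : γ2 ≠ 0 := ne_of_lt hγ2r
  have e1 : γ1 * ζ1 ^ 3 = 1 := by rw [hζ1]; field_simp
  have e2 : γ2 * ζ2 ^ 3 = 1 := by rw [hζ2]; field_simp
  have hζ1gt1 : 1 < ζ1 := by
    by_contra h
    push_neg at h
    have h3 : ζ1 ^ 3 ≤ 1 := pow_le_one₀ (le_of_lt hζ1pos) h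
    nlinarith [mul_le_mul_of_nonneg_left h3 (le_of_lt hγ1p)]
  have hB : ζ1 < -ζ2 := by
    by_contra h
    push_neg at h
    have h2 : (-ζ2) ^ 3 ≤ ζ1 ^ 3 := by
      apply pow_le_pow_left₀ (by linarith) h
    nlinarith [pow_pos (show (0:ℝ) < -ζ2 by linarith) 3]
  have hd : ζ2 - ζ1 < 0 := by linarith
  have hdne : ζ2 - ζ1 ≠ 0 := ne_of_lt hd
  have hsum : k1 + k2 = 1 := by
    rw [hk1, hk2, ← add_div]
    field_simp
    ring
  have hk2pos : 0 < k2 := by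
    rw [hk2]; exact div_pos_of_neg_of_neg (by linarith) hd
  have hlt : k2 < k1 := by
    rw [hk1, hk2, div_lt_div_right_of_neg hd]; linarith
  refine ⟨hsum, hlt, hk2pos, ?_⟩
  intro i hi
  lift i to ℕ using (by linarith : (0:ℤ) ≤ i) with n
  have hn : n ≠ 0 := by
    intro h; subst h; simp at hi
  rw [zpow_natCast, zpow_natCast]
  have hng : 0 < -γ2 := by linarith
  have h1 : (-γ2) ^ n < γ1 ^ n := pow_lt_pow_left₀ (by linarith) (le_of_lt hng) hn
  have h2 : -((-γ2) ^ n) ≤ γ2 ^ n := by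
    have : |γ2 ^ n| = (-γ2) ^ n := by
      rw [abs_pow, abs_of_neg hγ2r]
    rw [← this]; exact neg_abs_le _
  have h3 : 0 < γ1 ^ n := pow_pos hγ1p n
  have h4 : 0 < (-γ2) ^ n := pow_pos hng n
  nlinarith [mul_pos (sub_pos.2 hlt) h3, mul_pos hk2pos (sub_pos.2 h1),
    mul_le_mul_of_nonneg_left h2 (le_of_lt hk2pos)]
end

section
/- For every γ ∈ (γ_s, γ_w) one has the strict inequality (a + b*γ + a*γ^2)^q < γ^{q-p}. Equivalently, the envelope velocity satisfies s_env(γ) < p/q strictly between the strong and weak decay rates, so that in the exponentially weighted space with weight rate γ the essential spectrum of the linearization about the front lies strictly inside the unit circle. -/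
private lemma young_lt (x y t : ℝ) (hx : 0 < x) (hy : 0 < y) (hxy : x ≠ y)
    (ht0 : 0 < t) (ht1 : t < 1) : x ^ (1 - t) * y ^ t < (1 - t) * x + t * y := by
  have h1t : 0 < 1 - t := by linarith
  have hcc := strictConcaveOn_log_Ioi.2 (Set.mem_Ioi.2 hx) (Set.mem_Ioi.2 hy) hxy h1t ht0
    (by ring)
  rw [smul_eq_mul, smul_eq_mul, smul_eq_mul, smul_eq_mul] at hcc
  have hpos : 0 < (1 - t) * x + t * y := by positivity
  calc x ^ (1 - t) * y ^ t = Real.exp ((1 - t) * Real.log x + t * Real.log y) := by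
        rw [Real.exp_add, Real.rpow_def_of_pos hx, Real.rpow_def_of_pos hy, mul_comm (Real.log x),
          mul_comm (Real.log y)]
    _ < Real.exp (Real.log ((1 - t) * x + t * y)) := Real.exp_lt_exp.2 hcc
    _ = (1 - t) * x + t * y := Real.exp_log hpos

private lemma term_eq (x y A B t : ℝ) (hx : 0 ≤ x) (hy : 0 ≤ y) (hA : 0 < A) (hB : 0 < B) :
    x ^ (1 - t) * y ^ t = A ^ (1 - t) * B ^ t * ((x / A) ^ (1 - t) * (y / B) ^ t) := by
  rw [Real.div_rpow hx hA.le, Real.div_rpow hy hB.le]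
  field_simp

private lemma term_le (x y A B t : ℝ) (hx : 0 ≤ x) (hy : 0 ≤ y) (hA : 0 < A) (hB : 0 < B)
    (ht0 : 0 ≤ t) (ht1 : t ≤ 1) :
    x ^ (1 - t) * y ^ t ≤ A ^ (1 - t) * B ^ t * ((1 - t) * (x / A) + t * (y / B)) := by
  rw [term_eq x y A B t hx hy hA hB]
  have h := Real.geom_mean_le_arith_mean2_weighted (by linarith : (0:ℝ) ≤ 1 - t) ht0
    (div_nonneg hx hA.le) (div_nonneg hy hB.le) (by ring)
  exact mul_le_mul_of_nonneg_left h
    (mul_pos (Real.rpow_pos_of_pos hA _) (Real.rpow_pos_of_pos hB _)).le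

private lemma term_lt (x y A B t : ℝ) (hx : 0 < x) (hy : 0 < y) (hA : 0 < A) (hB : 0 < B)
    (ht0 : 0 < t) (ht1 : t < 1) (hne : x / A ≠ y / B) :
    x ^ (1 - t) * y ^ t < A ^ (1 - t) * B ^ t * ((1 - t) * (x / A) + t * (y / B)) := by
  rw [term_eq x y A B t hx.le hy.le hA hB]
  exact mul_lt_mul_of_pos_left
    (young_lt _ _ _ (div_pos hx hA) (div_pos hy hB) hne ht0 ht1)
    (mul_pos (Real.rpow_pos_of_pos hA _) (Real.rpow_pos_of_pos hB _))

private lemma rpow_pow_comm (x s : ℝ) (n : ℕ) (hx : 0 ≤ x) : (x ^ s) ^ n = (x ^ n) ^ s := by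
  rw [← Real.rpow_natCast (x ^ s) n, ← Real.rpow_mul hx, mul_comm s (n : ℝ),
    Real.rpow_mul hx, Real.rpow_natCast]

private lemma rpow_sq (x s : ℝ) (hx : 0 ≤ x) : (x ^ 2) ^ s = x ^ s * x ^ s := by
  rw [sq, Real.mul_rpow hx hx]

set_option maxHeartbeats 1000000 in
theorem stmt_16 (r m : ℝ) (hm0 : 0 < m) (hm1 : m < 1) (hr1 : 1 < r) (hr2 : r < 2 / m)
    (a b : ℝ) (ha : a = r * m / 2) (hb : b = r * (1 - m))
    (p q : ℕ) (hp : 0 < p) (hpq : p < q)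
    (γs γw : ℝ) (hγs : γs ∈ Set.Ioo (0 : ℝ) 1) (hγw : γw ∈ Set.Ioo (0 : ℝ) 1)
    (hsw : γs < γw)
    (heqs : (a + b * γs + a * γs ^ 2) ^ q = γs ^ (q - p))
    (heqw : (a + b * γw + a * γw ^ 2) ^ q = γw ^ (q - p)) :
    ∀ γ ∈ Set.Ioo γs γw, (a + b * γ + a * γ ^ 2) ^ q < γ ^ (q - p) := by
  have hr0 : 0 < r := lt_trans one_pos hr1
  have ha0 : 0 < a := by rw [ha]; exact div_pos (mul_pos hr0 hm0) two_pos
  have hb0 : 0 < b := by rw [hb]; exact mul_pos hr0 (by linarith)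
  obtain ⟨hγs0, hγs1⟩ := hγs
  obtain ⟨hγw0, hγw1⟩ := hγw
  intro γ hγmem
  obtain ⟨hg1, hg2⟩ := hγmem
  have hγ0 : 0 < γ := lt_trans hγs0 hg1
  set t := (Real.log γ - Real.log γs) / (Real.log γw - Real.log γs) with htdef
  clear_value t
  have hls : Real.log γs < Real.log γ := Real.log_lt_log hγs0 hg1
  have hlw : Real.log γ < Real.log γw := Real.log_lt_log hγ0 hg2
  have hd : 0 < Real.log γw - Real.log γs := by linarith
  have ht0 : 0 < t := htdef ▸ div_pos (by linarith) hd
  have ht1 : t < 1 := htdef ▸ (div_lt_one hd).2 (by linarith)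
  have h2 : t * (Real.log γw - Real.log γs) = Real.log γ - Real.log γs := by
    rw [htdef]; exact div_mul_cancel₀ _ hd.ne'
  have h1 : Real.log γs * (1 - t) + Real.log γw * t = Real.log γ := by linear_combination h2
  have hγeq : γ = γs ^ (1 - t) * γw ^ t := by
    rw [Real.rpow_def_of_pos hγs0, Real.rpow_def_of_pos hγw0, ← Real.exp_add, h1,
      Real.exp_log hγ0]
  set A := a + b * γs + a * γs ^ 2 with hAdef
  set B := a + b * γw + a * γw ^ 2 with hBdef
  clear_value A B
  have hA : 0 < A := by
    rw [hAdef]; exact add_pos (add_pos ha0 (mul_pos hb0 hγs0)) (mul_pos ha0 (pow_pos hγs0 2))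
  have hB : 0 < B := by
    rw [hBdef]; exact add_pos (add_pos ha0 (mul_pos hb0 hγw0)) (mul_pos ha0 (pow_pos hγw0 2))
  have haa : a ^ (1 - t) * a ^ t = a := by
    have h : (1 : ℝ) - t + t = 1 := by ring
    rw [← Real.rpow_add ha0, h, Real.rpow_one]
  have hbb : b ^ (1 - t) * b ^ t = b := by
    have h : (1 : ℝ) - t + t = 1 := by ring
    rw [← Real.rpow_add hb0, h, Real.rpow_one]
  have hdecomp : a + b * γ + a * γ ^ 2 =
      a ^ (1 - t) * a ^ t + (b * γs) ^ (1 - t) * ((b * γw) ^ t) +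
        (a * γs ^ 2) ^ (1 - t) * ((a * γw ^ 2) ^ t) := by
    rw [Real.mul_rpow hb0.le hγs0.le, Real.mul_rpow hb0.le hγw0.le,
      Real.mul_rpow ha0.le (sq_nonneg γs), Real.mul_rpow ha0.le (sq_nonneg γw),
      rpow_sq γs _ hγs0.le, rpow_sq γw _ hγw0.le, hγeq]
    linear_combination (-1 - (γs ^ (1 - t) * γw ^ t) ^ 2) * haa - (γs ^ (1 - t) * γw ^ t) * hbb
  have h1' : (1 - t) * (a / A) + t * (a / B) + ((1 - t) * ((b * γs) / A) + t * ((b * γw) / B)) +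
      ((1 - t) * ((a * γs ^ 2) / A) + t * ((a * γw ^ 2) / B)) = 1 := by
    field_simp
    rw [hAdef, hBdef]
    ring
  have hsum : A ^ (1 - t) * B ^ t * ((1 - t) * (a / A) + t * (a / B)) +
      A ^ (1 - t) * B ^ t * ((1 - t) * ((b * γs) / A) + t * ((b * γw) / B)) +
      A ^ (1 - t) * B ^ t * ((1 - t) * ((a * γs ^ 2) / A) + t * ((a * γw ^ 2) / B)) =
      A ^ (1 - t) * B ^ t := by
    linear_combination (A ^ (1 - t) * B ^ t) * h1'
  have hbγs : 0 < b * γs := mul_pos hb0 hγs0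
  have hbγw : 0 < b * γw := mul_pos hb0 hγw0
  have haγs : 0 < a * γs ^ 2 := mul_pos ha0 (pow_pos hγs0 2)
  have haγw : 0 < a * γw ^ 2 := mul_pos ha0 (pow_pos hγw0 2)
  have key : a + b * γ + a * γ ^ 2 < A ^ (1 - t) * B ^ t := by
    have t2 := term_le (a * γs ^ 2) (a * γw ^ 2) A B t haγs.le haγw.le hA hB ht0.le ht1.le
    rcases eq_or_ne A B with hAB | hAB
    · have hne : (b * γs) / A ≠ (b * γw) / B := by
        rw [← hAB]
        intro h
        rw [div_eq_div_iff hA.ne' hA.ne'] at h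
        exact absurd h (mul_lt_mul_of_pos_right (mul_lt_mul_of_pos_left hsw hb0) hA).ne
      have t0 := term_le a a A B t ha0.le ha0.le hA hB ht0.le ht1.le
      have t1 := term_lt (b * γs) (b * γw) A B t hbγs hbγw hA hB ht0 ht1 hne
      rw [hdecomp]
      linarith
    · have hne : a / A ≠ a / B := by
        intro h
        rw [div_eq_div_iff hA.ne' hB.ne'] at h
        exact hAB (mul_left_cancel₀ ha0.ne' h).symm
      have t0 := term_lt a a A B t ha0 ha0 hA hB ht0 ht1 hne
      have t1 := term_le (b * γs) (b * γw) A B t hbγs.le hbγw.le hA hB ht0.le ht1.le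
      rw [hdecomp]
      linarith
  have hq : q ≠ 0 := by omega
  have hP0 : 0 ≤ a + b * γ + a * γ ^ 2 := by
    have := mul_pos hb0 hγ0
    have := mul_pos ha0 (pow_pos hγ0 2)
    linarith
  have step : (a + b * γ + a * γ ^ 2) ^ q < (A ^ (1 - t) * B ^ t) ^ q :=
    pow_lt_pow_left₀ key hP0 hq
  have hfin : (A ^ (1 - t) * B ^ t) ^ q = γ ^ (q - p) := by
    calc (A ^ (1 - t) * B ^ t) ^ q = (A ^ q) ^ (1 - t) * (B ^ q) ^ t := by
          rw [mul_pow, rpow_pow_comm A _ q hA.le, rpow_pow_comm B _ q hB.le]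
      _ = (γs ^ (q - p)) ^ (1 - t) * (γw ^ (q - p)) ^ t := by rw [heqs, heqw]
      _ = (γs ^ (1 - t) * γw ^ t) ^ (q - p) := by
          rw [mul_pow, rpow_pow_comm γs _ _ hγs0.le, rpow_pow_comm γw _ _ hγw0.le]
      _ = γ ^ (q - p) := by rw [← hγeq]
  rwa [hfin] at step
end

section
/- For every λ ∈ ℂ with |λ| ≥ 1, the complex polynomial λ*X^{q-p} - (a + b*X + a*X^2)^q has exactly q - p roots, counted with multiplicity, in the closed disk {z ∈ ℂ : |z| ≤ γ_s}. -/
open Polynomial Set Filter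


/-- Strict envelope inequality between the two crossing points, via MVT. -/
lemma key_ineq (a b : ℝ) (ha : 0 < a) (hb : 0 < b) (p q : ℕ) (hp : 0 < p) (hpq : p < q)
    (γs γw : ℝ) (hs0 : 0 < γs) (hsw : γs < γw)
    (heqs : (a + b * γs + a * γs ^ 2) ^ q = γs ^ (q - p))
    (heqw : (a + b * γw + a * γw ^ 2) ^ q = γw ^ (q - p)) :
    ∀ t : ℝ, γs < t → t < γw → (a + b * t + a * t ^ 2) ^ q < t ^ (q - p) := by
  set n : ℕ := q - p with hn
  have hnq : (n : ℝ) < q := by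
    have : n < q := by omega
    exact_mod_cast this
  have hn1 : 1 ≤ n := by omega
  set P : ℝ → ℝ := fun t => a + b * t + a * t ^ 2 with hP
  have hPpos : ∀ t : ℝ, 0 < t → 0 < P t := by
    intro t ht; simp only [hP]; nlinarith
  set g : ℝ → ℝ := fun t => q * Real.log (P t) - n * Real.log t with hg
  -- derivative
  have hderiv : ∀ t : ℝ, 0 < t → HasDerivAt g (q * ((b + 2 * a * t) / P t) - n * (1 / t)) t := by
    intro t ht
    have h1 : HasDerivAt P (b + 2 * a * t) t := by
      have : HasDerivAt (fun t : ℝ => a + b * t + a * t ^ 2) (0 + b * 1 + a * (2 * t)) t := by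
        exact (((hasDerivAt_const t a).add ((hasDerivAt_id t).const_mul b)).add
          ((hasDerivAt_pow 2 t).const_mul a)).congr_deriv (by ring)
      simpa using this.congr_deriv (by ring)
    have h2 : HasDerivAt (fun t => Real.log (P t)) ((b + 2 * a * t) / P t) t := by
      simpa [div_eq_mul_inv, mul_comm] using (h1.log (ne_of_gt (hPpos t ht)))
    have h3 : HasDerivAt Real.log (1 / t) t := by
      simpa [one_div] using Real.hasDerivAt_log (ne_of_gt ht)
    exact ((h2.const_mul (q : ℝ)).sub (h3.const_mul (n : ℝ)))
  -- endpoints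
  have hgs : g γs = 0 := by
    have : Real.log ((P γs) ^ q) = Real.log (γs ^ n) := by rw [heqs]
    rw [Real.log_pow, Real.log_pow] at this
    simp only [hg]; push_cast at this ⊢; linarith
  have hw0 : 0 < γw := lt_trans hs0 hsw
  have hgw : g γw = 0 := by
    have : Real.log ((P γw) ^ q) = Real.log (γw ^ n) := by rw [heqw]
    rw [Real.log_pow, Real.log_pow] at this
    simp only [hg]; push_cast at this ⊢; linarith
  -- W strictly increasing
  set W : ℝ → ℝ := fun t => q * (t * (b + 2 * a * t)) - n * P t with hW
  have hWmono : ∀ s t : ℝ, 0 < s → s < t → W s < W t := by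
    intro s t hs hst
    have hnq' : (n : ℝ) ≤ q := le_of_lt hnq
    simp only [hW, hP]
    nlinarith [mul_pos (sub_pos.2 hst) hb, mul_pos (sub_pos.2 hst) (mul_pos ha (by linarith : (0:ℝ) < t + s)), hnq]
  -- sign relation: g' t = W t / (t * P t)
  intro t0 hst0 ht0w
  by_contra hcon
  push_neg at hcon
  have ht0pos : 0 < t0 := lt_trans hs0 hst0
  have hgt0 : 0 ≤ g t0 := by
    have hPq : t0 ^ n ≤ (P t0) ^ q := hcon
    have : Real.log (t0 ^ n) ≤ Real.log ((P t0) ^ q) :=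
      Real.log_le_log (pow_pos ht0pos n) hPq
    rw [Real.log_pow, Real.log_pow] at this
    simp only [hg]; push_cast at this ⊢; linarith
  have hcont : ∀ x ∈ Icc γs γw, 0 < x := fun x hx => lt_of_lt_of_le hs0 hx.1
  have hgcont : ContinuousOn g (Icc γs γw) := by
    intro x hx
    exact ((hderiv x (hcont x hx)).continuousAt).continuousWithinAt
  -- MVT on [γs, t0]
  obtain ⟨ξ1, hξ1, hd1⟩ := exists_hasDerivAt_eq_slope g
    (fun x => q * ((b + 2 * a * x) / P x) - n * (1 / x)) hst0
    (hgcont.mono (Icc_subset_Icc le_rfl (le_of_lt ht0w)))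
    (fun x hx => hderiv x (lt_trans hs0 hx.1))
  obtain ⟨ξ2, hξ2, hd2⟩ := exists_hasDerivAt_eq_slope g
    (fun x => q * ((b + 2 * a * x) / P x) - n * (1 / x)) ht0w
    (hgcont.mono (Icc_subset_Icc (le_of_lt hst0) le_rfl))
    (fun x hx => hderiv x (lt_trans ht0pos hx.1))
  have hξ1pos : 0 < ξ1 := lt_trans hs0 hξ1.1
  have hξ2pos : 0 < ξ2 := lt_trans ht0pos hξ2.1
  have hs1 : 0 ≤ q * ((b + 2 * a * ξ1) / P ξ1) - n * (1 / ξ1) := by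
    rw [hd1, hgs]
    have : 0 ≤ g t0 - 0 := by linarith
    exact div_nonneg this (by linarith [hξ1.2, hst0])
  have hs2 : q * ((b + 2 * a * ξ2) / P ξ2) - n * (1 / ξ2) ≤ 0 := by
    rw [hd2, hgw]
    apply div_nonpos_of_nonpos_of_nonneg (by linarith) (by linarith [hξ2.1, ht0w])
  -- translate derivative sign into W sign
  have hWsign : ∀ ξ : ℝ, 0 < ξ →
      q * ((b + 2 * a * ξ) / P ξ) - n * (1 / ξ) = W ξ / (ξ * P ξ) := by
    intro ξ hξ
    have h1 : P ξ ≠ 0 := ne_of_gt (hPpos ξ hξ)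
    have h2 : ξ ≠ 0 := ne_of_gt hξ
    field_simp [hW]
    ring
  have hc1 : 0 < ξ1 * P ξ1 := mul_pos hξ1pos (hPpos ξ1 hξ1pos)
  have hc2 : 0 < ξ2 * P ξ2 := mul_pos hξ2pos (hPpos ξ2 hξ2pos)
  rw [hWsign ξ1 hξ1pos] at hs1
  rw [hWsign ξ2 hξ2pos] at hs2
  have hW1 : 0 ≤ W ξ1 := by
    have h := mul_nonneg hs1 hc1.le
    rwa [div_mul_cancel₀ _ (ne_of_gt hc1)] at h
  have hW2 : W ξ2 ≤ 0 := by
    have h := mul_nonpos_of_nonpos_of_nonneg hs2 hc2.le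
    rwa [div_mul_cancel₀ _ (ne_of_gt hc2)] at h
  have : W ξ1 < W ξ2 := hWmono ξ1 ξ2 hξ1pos (lt_trans hξ1.2 hξ2.1)
  linarith


lemma exists_enum {D : ℕ} (s : Multiset ℂ) (h : Multiset.card s = D) :
    ∃ v : Fin D → ℂ, s = Multiset.map v Finset.univ.val := by
  have hlen : s.toList.length = D := by rw [Multiset.length_toList, h]
  refine ⟨fun i => s.toList.get (Fin.cast hlen.symm i), ?_⟩
  rw [Fin.univ_val_map]
  have : List.ofFn (fun i : Fin D => s.toList.get (Fin.cast hlen.symm i)) = s.toList := by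
    apply List.ext_get
    · simp [hlen]
    · intro i h1 h2
      simp [List.get_ofFn]
  rw [this, Multiset.coe_toList]

lemma poly_eq_prod {f : Polynomial ℂ} {D : ℕ} (hD : f.natDegree = D) (hf : f ≠ 0) :
    ∃ v : Fin D → ℂ, f.roots = Multiset.map v Finset.univ.val ∧
      ∀ z : ℂ, f.eval z = f.coeff D * ∏ i, (z - v i) := by
  have hsplit : f.Splits := IsAlgClosed.splits f
  have hcard : Multiset.card f.roots = D := by
    have := hsplit.natDegree_eq_card_roots
    rw [hD] at this
    exact this.symm
  obtain ⟨v, hv⟩ := exists_enum f.roots hcard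
  refine ⟨v, hv, fun z => ?_⟩
  conv_lhs => rw [hsplit.eq_prod_roots]
  rw [hv]
  rw [eval_mul, eval_C, eval_multiset_prod, Multiset.map_map, Multiset.map_map]
  have hlead : f.leadingCoeff = f.coeff D := by rw [Polynomial.leadingCoeff, hD]
  rw [hlead, Finset.prod_eq_multiset_prod]
  congr 1
  exact congrArg Multiset.prod (Multiset.map_congr rfl fun i _ => by
    simp only [Function.comp_apply, eval_sub, eval_X, eval_C])

lemma roots_of_prod (c : ℂ) (hc : c ≠ 0) {D : ℕ} (v : Fin D → ℂ) :
    (C c * ∏ i : Fin D, (X - C (v i))).roots = Multiset.map v Finset.univ.val := by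
  rw [roots_C_mul _ hc]
  have h : (∏ i : Fin D, (X - C (v i))) =
      ((Multiset.map v Finset.univ.val).map (fun a => X - C a)).prod := by
    rw [Finset.prod_eq_multiset_prod, Multiset.map_map]
    rfl
  rw [h, roots_multiset_prod_X_sub_C]

set_option maxHeartbeats 2000000 in
lemma homotopy_count (D : ℕ) (hD : 0 < D) (ρ : ℝ) (hρ : 0 < ρ) (A B : Polynomial ℂ)
    (hA : A.natDegree ≤ D) (hB : B.natDegree ≤ D)
    (hlead : ∀ t : ℝ, t ∈ Icc (0:ℝ) 1 → (C (1 - (t:ℂ)) * A + C (t:ℂ) * B).coeff D ≠ 0)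
    (hcirc : ∀ t : ℝ, t ∈ Icc (0:ℝ) 1 → ∀ z : ℂ, ‖z‖ = ρ →
        (C (1 - (t:ℂ)) * A + C (t:ℂ) * B).eval z ≠ 0) :
    Multiset.card (A.roots.filter (fun z => ‖z‖ < ρ)) =
      Multiset.card (B.roots.filter (fun z => ‖z‖ < ρ)) := by
  set Q : ℝ → Polynomial ℂ := fun t => C (1 - (t:ℂ)) * A + C (t:ℂ) * B with hQ
  set N : ℝ → ℕ := fun t => Multiset.card ((Q t).roots.filter (fun z => ‖z‖ < ρ))
    with hN
  have hQ0 : Q 0 = A := by simp [hQ]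
  have hQ1 : Q 1 = B := by simp [hQ]
  have hdegle : ∀ t : ℝ, (Q t).natDegree ≤ D := by
    intro t
    refine le_trans (natDegree_add_le _ _) (max_le ?_ ?_)
    · exact le_trans (natDegree_C_mul_le _ _) hA
    · exact le_trans (natDegree_C_mul_le _ _) hB
  have hdeg : ∀ t ∈ Icc (0:ℝ) 1, (Q t).natDegree = D := fun t ht =>
    le_antisymm (hdegle t) (le_natDegree_of_ne_zero (hlead t ht))
  have hne : ∀ t ∈ Icc (0:ℝ) 1, Q t ≠ 0 := by
    intro t ht h0
    exact hlead t ht (by rw [show (C (1 - (t:ℂ)) * A + C (t:ℂ) * B) = Q t from rfl, h0]; simp)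
  have hcoeff : ∀ (t : ℝ) (k : ℕ),
      (Q t).coeff k = (1 - (t:ℂ)) * A.coeff k + (t:ℂ) * B.coeff k := by
    intro t k; simp only [hQ]; rw [coeff_add, coeff_C_mul, coeff_C_mul]
  have heval : ∀ (t : ℝ) (z : ℂ),
      (Q t).eval z = (1 - (t:ℂ)) * A.eval z + (t:ℂ) * B.eval z := by
    intro t z; simp [hQ]
  -- uniform lower bound on the top coefficient
  obtain ⟨tm, htm, hmin⟩ := (isCompact_Icc (a := (0:ℝ)) (b := 1)).exists_isMinOn
    (nonempty_Icc.2 zero_le_one)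
    (Continuous.continuousOn (by fun_prop :
      Continuous (fun t : ℝ => ‖(1 - (t:ℂ)) * A.coeff D + (t:ℂ) * B.coeff D‖)))
  set ε : ℝ := ‖(1 - (tm:ℂ)) * A.coeff D + (tm:ℂ) * B.coeff D‖ with hε
  have hεpos : 0 < ε := by
    rw [hε]
    have := hlead tm htm
    rw [hcoeff tm D] at this
    exact norm_pos_iff.2 this
  have hεle : ∀ t ∈ Icc (0:ℝ) 1, ε ≤ ‖(Q t).coeff D‖ := by
    intro t ht
    rw [hcoeff t D]
    exact hmin ht
  set M : ℝ := ∑ k ∈ Finset.range D, (‖A.coeff k‖ + ‖B.coeff k‖)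
    with hM
  set R : ℝ := max 1 (M / ε) with hR
  have hR1 : (1:ℝ) ≤ R := le_max_left _ _
  -- uniform bound on roots
  have hbound : ∀ t ∈ Icc (0:ℝ) 1, ∀ z ∈ (Q t).roots, ‖z‖ ≤ R := by
    intro t ht z hz
    have hroot : (Q t).eval z = 0 := (mem_roots'.1 hz).2
    rcases le_or_gt (‖z‖) 1 with h1 | h1
    · exact le_trans h1 hR1
    · have hsum : (Q t).eval z = ∑ k ∈ Finset.range (D + 1), (Q t).coeff k * z ^ k :=
        eval_eq_sum_range' (lt_of_le_of_lt (hdegle t) (Nat.lt_succ_self D)) z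
      rw [Finset.sum_range_succ] at hsum
      have htop : (Q t).coeff D * z ^ D = -∑ k ∈ Finset.range D, (Q t).coeff k * z ^ k := by
        rw [hroot] at hsum; linear_combination -hsum
      have e1 : ‖1 - (t:ℂ)‖ ≤ 1 := by
        rw [show ((1:ℂ) - t) = ((1 - t : ℝ) : ℂ) by push_cast; ring, Complex.norm_real, Real.norm_eq_abs,
          abs_of_nonneg (by linarith [ht.2])]
        linarith [ht.1]
      have e2 : ‖(t:ℂ)‖ ≤ 1 := by
        rw [Complex.norm_real, Real.norm_eq_abs, abs_of_nonneg ht.1]; exact ht.2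
      have hcb : ∀ k : ℕ, ‖(Q t).coeff k‖ ≤
          ‖A.coeff k‖ + ‖B.coeff k‖ := by
        intro k
        rw [hcoeff t k]
        refine le_trans (norm_add_le _ _) ?_
        rw [norm_mul, norm_mul]
        exact add_le_add (mul_le_of_le_one_left (norm_nonneg _) e1)
          (mul_le_of_le_one_left (norm_nonneg _) e2)
      -- main estimate
      have hzpos : (0:ℝ) < ‖z‖ := lt_trans zero_lt_one h1
      have hest : ε * ‖z‖ ^ D ≤ M * ‖z‖ ^ (D - 1) := by
        calc ε * ‖z‖ ^ D
            ≤ ‖(Q t).coeff D‖ * ‖z‖ ^ D := by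
              gcongr; exact hεle t ht
          _ = ‖(Q t).coeff D * z ^ D‖ := by rw [norm_mul, norm_pow]
          _ = ‖∑ k ∈ Finset.range D, (Q t).coeff k * z ^ k‖ := by
              rw [htop, norm_neg]
          _ ≤ ∑ k ∈ Finset.range D, ‖(Q t).coeff k * z ^ k‖ := by
              exact norm_sum_le _ _
          _ ≤ ∑ k ∈ Finset.range D,
                (‖A.coeff k‖ + ‖B.coeff k‖) *
                  ‖z‖ ^ (D - 1) := by
              apply Finset.sum_le_sum
              intro k hk
              rw [norm_mul, norm_pow]
              have hk' : k ≤ D - 1 := by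
                have := Finset.mem_range.1 hk; omega
              exact mul_le_mul (hcb k) (pow_le_pow_right₀ (le_of_lt h1) hk')
                (by positivity) (by positivity)
          _ = M * ‖z‖ ^ (D - 1) := by rw [hM, ← Finset.sum_mul]
      have hpow : ‖z‖ ^ D = ‖z‖ ^ (D - 1) * ‖z‖ := by
        rw [← pow_succ]; congr 1; omega
      rw [hpow, ← mul_assoc] at hest
      have hpowpos : (0:ℝ) < ‖z‖ ^ (D - 1) := by positivity
      rw [mul_right_comm] at hest
      have h2 : ε * ‖z‖ ≤ M := le_of_mul_le_mul_right hest hpowpos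
      have hz1 : ‖z‖ ≤ M / ε := by
        rw [le_div_iff₀ hεpos]; linarith [h2]
      exact le_trans hz1 (le_max_right _ _)
  -- eventual constancy of the count
  have key : ∀ t0 ∈ Icc (0:ℝ) 1, ∀ᶠ t in nhdsWithin t0 (Icc (0:ℝ) 1), N t = N t0 := by
    intro t0 ht0
    by_contra hcon
    have hfreq : ∃ᶠ t in nhdsWithin t0 (Icc (0:ℝ) 1), N t ≠ N t0 := Filter.not_eventually.1 hcon
    have hclos : t0 ∈ closure {t : ℝ | (N t ≠ N t0) ∧ t ∈ Icc (0:ℝ) 1} := by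
      rw [mem_closure_iff_frequently]
      exact frequently_nhdsWithin_iff.1 hfreq
    obtain ⟨u, hu, hulim⟩ := mem_closure_iff_seq_limit.1 hclos
    have huI : ∀ j, u j ∈ Icc (0:ℝ) 1 := fun j => (hu j).2
    have hud : ∀ j, N (u j) ≠ N t0 := fun j => (hu j).1
    -- enumerate roots
    have hrep := fun j => poly_eq_prod (hdeg (u j) (huI j)) (hne (u j) (huI j))
    choose v hv1 hv2 using hrep
    -- boundedness
    have hvb : ∀ j, v j ∈ Metric.closedBall (0 : Fin D → ℂ) R := by
      intro j
      rw [Metric.mem_closedBall, dist_zero_right]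
      rw [pi_norm_le_iff_of_nonneg (le_trans zero_le_one hR1)]
      intro i
      have hmem : v j i ∈ (Q (u j)).roots := by
        rw [hv1 j]
        exact Multiset.mem_map.2 ⟨i, by simp, rfl⟩
      exact hbound (u j) (huI j) _ hmem
    obtain ⟨w, hw, φ, hφ, hconv⟩ := tendsto_subseq_of_bounded
      (Metric.isBounded_closedBall (x := (0 : Fin D → ℂ)) (r := R)) hvb
    -- convergence of top coefficients
    have hulimφ : Tendsto (fun k => u (φ k)) atTop (nhds t0) := hulim.comp hφ.tendsto_atTop
    have hcD : Continuous (fun t : ℝ => (1 - (t:ℂ)) * A.coeff D + (t:ℂ) * B.coeff D) := by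
      fun_prop
    have hcofn : Tendsto (fun k => (Q (u (φ k))).coeff D) atTop (nhds ((Q t0).coeff D)) := by
      have := (hcD.tendsto t0).comp hulimφ
      simp only [Function.comp_def] at this
      convert this using 2 with k
      · exact hcoeff (u (φ k)) D
      · exact hcoeff t0 D
    -- pointwise limit of evaluations
    have hevalid : ∀ z : ℂ, (Q t0).eval z = (Q t0).coeff D * ∏ i, (z - w i) := by
      intro z
      have hcz : Continuous (fun t : ℝ => (1 - (t:ℂ)) * A.eval z + (t:ℂ) * B.eval z) := by
        fun_prop
      have h1 : Tendsto (fun k => (Q (u (φ k))).eval z) atTop (nhds ((Q t0).eval z)) := by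
        have := (hcz.tendsto t0).comp hulimφ
        simp only [Function.comp_def] at this
        convert this using 2 with k
        · exact heval (u (φ k)) z
        · exact heval t0 z
      have h3 : Tendsto (fun k => (Q (u (φ k))).coeff D * ∏ i, (z - v (φ k) i)) atTop
          (nhds ((Q t0).coeff D * ∏ i, (z - w i))) := by
        refine hcofn.mul (tendsto_finset_prod _ fun i _ => ?_)
        exact tendsto_const_nhds.sub (tendsto_pi_nhds.1 hconv i)
      have h2 : (fun k => (Q (u (φ k))).eval z)
          = fun k => (Q (u (φ k))).coeff D * ∏ i, (z - v (φ k) i) :=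
        funext fun k => hv2 (φ k) z
      rw [h2] at h1
      exact tendsto_nhds_unique h1 h3
    have hQt0 : Q t0 = C ((Q t0).coeff D) * ∏ i, (X - C (w i)) := by
      apply Polynomial.funext
      intro z
      rw [hevalid z]
      simp [eval_prod]
    have hroots0 : (Q t0).roots = Multiset.map w Finset.univ.val := by
      conv_lhs => rw [hQt0]
      exact roots_of_prod _ (hlead t0 ht0) w
    have hwρ : ∀ i, ‖w i‖ ≠ ρ := by
      intro i h
      apply hcirc t0 ht0 (w i) h
      have hmem : w i ∈ (Q t0).roots := by
        rw [hroots0]; exact Multiset.mem_map.2 ⟨i, by simp, rfl⟩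
      exact (mem_roots'.1 hmem).2
    have hev : ∀ᶠ (k : ℕ) in atTop,
        ∀ i, (‖v (φ k) i‖ < ρ ↔ ‖w i‖ < ρ) := by
      rw [eventually_all]
      intro i
      have hti : Tendsto (fun k => ‖v (φ k) i‖) atTop
          (nhds (‖w i‖)) :=
        (continuous_norm.tendsto _).comp (tendsto_pi_nhds.1 hconv i)
      rcases lt_or_gt_of_ne (hwρ i) with h | h
      · exact (hti.eventually_lt_const h).mono fun k hk => by
          constructor <;> intro <;> [exact h; exact hk]
      · exact (hti.eventually_const_lt h).mono fun k hk =>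
          ⟨fun h' => absurd h' (not_lt.2 hk.le), fun h' => absurd h' (not_lt.2 h.le)⟩
    obtain ⟨k, hk⟩ := hev.exists
    apply hud (φ k)
    have hcount : ∀ (g : Fin D → ℂ) (t : ℝ), (Q t).roots = Multiset.map g Finset.univ.val →
        N t = Multiset.card (Multiset.filter (fun i => ‖g i‖ < ρ)
          Finset.univ.val) := by
      intro g t hg
      show Multiset.card (Multiset.filter _ (Q t).roots) = _
      rw [hg, Multiset.filter_map, Multiset.card_map]
      rfl
    rw [hcount (v (φ k)) (u (φ k)) (hv1 (φ k)), hcount w t0 hroots0]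
    congr 1
    exact Multiset.filter_congr (fun i _ => hk i)
  -- globalize via locally constant function on ℝ
  set π : ℝ → ℝ := fun t => max 0 (min 1 t) with hπ
  have hπmem : ∀ t : ℝ, π t ∈ Icc (0:ℝ) 1 :=
    fun t => ⟨le_max_left _ _, max_le zero_le_one (min_le_left _ _)⟩
  have hπid : ∀ t ∈ Icc (0:ℝ) 1, π t = t := by
    intro t ht
    simp only [hπ]
    rw [min_eq_right ht.2, max_eq_right ht.1]
  have hπcont : Continuous π := continuous_const.max (continuous_const.min continuous_id)
  set f : ℝ → ℕ := fun t => N (π t) with hf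
  have hlc : IsLocallyConstant f := by
    rw [IsLocallyConstant.iff_eventually_eq]
    intro x
    rcases lt_or_ge x 0 with hx | hx
    · refine (eventually_lt_nhds hx).mono fun y hy => ?_
      have e1 : π y = 0 := by
        simp only [hπ]
        rw [min_eq_right (by linarith), max_eq_left (by linarith)]
      have e2 : π x = 0 := by
        simp only [hπ]
        rw [min_eq_right (by linarith), max_eq_left (by linarith)]
      simp only [hf, e1, e2]
    rcases lt_or_ge 1 x with hx1 | hx1
    · refine (eventually_gt_nhds hx1).mono fun y hy => ?_
      have e1 : π y = 1 := by
        simp only [hπ]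
        rw [min_eq_left (by linarith), max_eq_right (by linarith)]
      have e2 : π x = 1 := by
        simp only [hπ]
        rw [min_eq_left (by linarith), max_eq_right (by linarith)]
      simp only [hf, e1, e2]
    · have hxI : x ∈ Icc (0:ℝ) 1 := ⟨hx, hx1⟩
      have hten : Tendsto π (nhds x) (nhdsWithin x (Icc (0:ℝ) 1)) := by
        apply tendsto_nhdsWithin_of_tendsto_nhds_of_eventually_within
        · have := hπcont.tendsto x
          rwa [hπid x hxI] at this
        · exact Filter.Eventually.of_forall hπmem
      have := hten.eventually (key x hxI)
      refine this.mono fun y hy => ?_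
      simp only [hf]
      rw [hy, hπid x hxI]
  have h01 : f 0 = f 1 := hlc.apply_eq_of_preconnectedSpace 0 1
  have e0 : f 0 = N 0 := by rw [hf]; simp only; rw [hπid 0 (by norm_num)]
  have e1 : f 1 = N 1 := by rw [hf]; simp only; rw [hπid 1 (by norm_num)]
  have : N 0 = N 1 := by rw [← e0, ← e1, h01]
  simp only [hN] at this
  rw [hQ0, hQ1] at this
  exact this

set_option maxHeartbeats 3000000 in
theorem stmt_17 (r m : ℝ) (hm0 : 0 < m) (hm1 : m < 1) (hr1 : 1 < r) (hr2 : r < 2 / m)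
    (a b : ℝ) (ha : a = r * m / 2) (hb : b = r * (1 - m))
    (p q : ℕ) (hp : 0 < p) (hpq : p < q)
    (γs γw : ℝ) (hγs : γs ∈ Set.Ioo (0 : ℝ) 1) (hγw : γw ∈ Set.Ioo (0 : ℝ) 1)
    (hsw : γs < γw)
    (heqs : (a + b * γs + a * γs ^ 2) ^ q = γs ^ (q - p))
    (heqw : (a + b * γw + a * γw ^ 2) ^ q = γw ^ (q - p))
    (lam : ℂ) (hlam : 1 ≤ ‖lam‖) :
    Multiset.card
      (((C lam * X ^ (q - p) -
          (C (a : ℂ) + C (b : ℂ) * X + C (a : ℂ) * X ^ 2) ^ q).roots).filter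
        (fun z => ‖z‖ ≤ γs)) = q - p := by
  have ha' : 0 < a := by rw [ha]; positivity
  have hb' : 0 < b := by rw [hb]; nlinarith
  set n : ℕ := q - p with hn
  have hn1 : 0 < n := by omega
  set D : ℕ := 2 * q with hD
  have hD0 : 0 < D := by omega
  have hnD : n < D := by omega
  have hkey := key_ineq a b ha' hb' p q hp hpq γs γw hγs.1 hsw heqs heqw
  set ρ : ℝ := (γs + γw) / 2 with hρ
  have hρs : γs < ρ := by rw [hρ]; linarith
  have hρw : ρ < γw := by rw [hρ]; linarith
  have hρ0 : 0 < ρ := lt_trans hγs.1 hρs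
  set Pρ : ℝ := a + b * ρ + a * ρ ^ 2 with hPρdef
  have hPρpos : 0 < Pρ := by rw [hPρdef]; positivity
  have hPρ : Pρ ^ q < ρ ^ n := hkey ρ hρs hρw
  set K : ℝ := Pρ ^ q + a ^ q * (1 + ρ ^ (2 * q)) with hK
  have hKpos : 0 < K := by rw [hK]; positivity
  set σ : ℝ := min 1 (min (ρ ^ n / (2 * K)) (1 / (2 * a ^ q * ρ ^ (q + p)))) with hσ
  have hσ0 : 0 < σ := by
    rw [hσ]; refine lt_min zero_lt_one (lt_min (by positivity) (by positivity))
  have hσ1 : σ ≤ 1 := min_le_left _ _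
  have hσK : σ * K < ρ ^ n := by
    have h1 : σ ≤ ρ ^ n / (2 * K) := le_trans (min_le_right _ _) (min_le_left _ _)
    rw [le_div_iff₀ (by positivity : (0:ℝ) < 2 * K)] at h1
    nlinarith [mul_pos hσ0 hKpos]
  have hσρ : σ * (a ^ q * ρ ^ (q + p)) < 1 := by
    have h1 : σ ≤ 1 / (2 * a ^ q * ρ ^ (q + p)) :=
      le_trans (min_le_right _ _) (min_le_right _ _)
    have hpos : (0:ℝ) < a ^ q * ρ ^ (q + p) := by positivity
    rw [le_div_iff₀ (by positivity)] at h1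
    nlinarith
  -- the polynomials
  set Pq : Polynomial ℂ := (C (a:ℂ) + C (b:ℂ) * X + C (a:ℂ) * X ^ 2) ^ q with hPq
  set A0 : Polynomial ℂ := C lam * X ^ n - Pq with hA0
  set A1 : Polynomial ℂ := C lam * X ^ n - C (σ:ℂ) * Pq with hA1
  set A2 : Polynomial ℂ := C lam * X ^ n -
    C (σ:ℂ) * (C ((a:ℂ) ^ q) + C ((a:ℂ) ^ q) * X ^ (2 * q)) with hA2
  set A3 : Polynomial ℂ := C lam * X ^ n - C ((σ:ℂ) * (a:ℂ) ^ q) * X ^ (2 * q) with hA3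
  -- degree and coefficient facts
  have haC : (a:ℂ) ≠ 0 := by exact_mod_cast ne_of_gt ha'
  have hbase : (C (a:ℂ) + C (b:ℂ) * X + C (a:ℂ) * X ^ 2)
      = C (a:ℂ) * X ^ 2 + C (b:ℂ) * X + C (a:ℂ) := by ring
  have hbdeg : (C (a:ℂ) + C (b:ℂ) * X + C (a:ℂ) * X ^ 2).natDegree = 2 := by
    rw [hbase]; exact natDegree_quadratic haC
  have hblead : (C (a:ℂ) + C (b:ℂ) * X + C (a:ℂ) * X ^ 2).leadingCoeff = (a:ℂ) := by
    rw [hbase]; exact leadingCoeff_quadratic haC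
  have hPqdeg : Pq.natDegree = D := by rw [hPq, natDegree_pow, hbdeg, hD]; ring
  have hPqD : Pq.coeff D = (a:ℂ) ^ q := by
    have h1 : Pq.coeff D = Pq.leadingCoeff := by rw [Polynomial.leadingCoeff, hPqdeg]
    rw [h1, hPq, leadingCoeff_pow, hblead]
  have hXnD : (C lam * X ^ n).coeff D = 0 := by
    rw [coeff_C_mul, coeff_X_pow, if_neg (by omega : ¬ D = n), mul_zero]
  have hdegCXn : (C lam * X ^ n).natDegree ≤ D :=
    le_trans (natDegree_C_mul_le _ _) (by rw [natDegree_X_pow]; omega)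
  have hA0deg : A0.natDegree ≤ D :=
    le_trans (natDegree_sub_le _ _) (max_le hdegCXn (le_of_eq hPqdeg))
  have hA1deg : A1.natDegree ≤ D :=
    le_trans (natDegree_sub_le _ _) (max_le hdegCXn
      (le_trans (natDegree_C_mul_le _ _) (le_of_eq hPqdeg)))
  have hinner2deg : (C ((a:ℂ) ^ q) + C ((a:ℂ) ^ q) * X ^ (2 * q)).natDegree ≤ D := by
    refine le_trans (natDegree_add_le _ _) (max_le ?_ ?_)
    · rw [natDegree_C]; omega
    · exact le_trans (natDegree_C_mul_le _ _) (by rw [natDegree_X_pow, hD])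
  have hA2deg : A2.natDegree ≤ D :=
    le_trans (natDegree_sub_le _ _) (max_le hdegCXn
      (le_trans (natDegree_C_mul_le _ _) hinner2deg))
  have hA3deg : A3.natDegree ≤ D :=
    le_trans (natDegree_sub_le _ _) (max_le hdegCXn
      (le_trans (natDegree_C_mul_le _ _) (by rw [natDegree_X_pow, hD])))
  have hA0D : A0.coeff D = -((a:ℂ) ^ q) := by
    rw [hA0, coeff_sub, hXnD, hPqD]; ring
  have hA1D : A1.coeff D = -((σ:ℂ) * (a:ℂ) ^ q) := by
    rw [hA1, coeff_sub, hXnD, coeff_C_mul, hPqD]; ring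
  have hXD : (X ^ (2 * q) : Polynomial ℂ).coeff D = 1 := by
    rw [coeff_X_pow, if_pos (by rw [hD])]
  have hA2D : A2.coeff D = -((σ:ℂ) * (a:ℂ) ^ q) := by
    rw [hA2, coeff_sub, hXnD, coeff_C_mul, coeff_add, coeff_C,
      if_neg (by omega : ¬ D = 0), coeff_C_mul, hXD]
    ring
  have hA3D : A3.coeff D = -((σ:ℂ) * (a:ℂ) ^ q) := by
    rw [hA3, coeff_sub, hXnD, coeff_C_mul, hXD]
    ring
  have hσaq : (σ:ℂ) * (a:ℂ) ^ q ≠ 0 := by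
    have : ((σ * a ^ q : ℝ) : ℂ) ≠ 0 := by
      exact_mod_cast ne_of_gt (by positivity : (0:ℝ) < σ * a ^ q)
    push_cast at this
    exact this
  -- evaluation facts
  have hPz : ∀ z : ℂ, Pq.eval z = ((a:ℂ) + (b:ℂ) * z + (a:ℂ) * z ^ 2) ^ q := by
    intro z; rw [hPq]; simp
  have habsPgen : ∀ z : ℂ, ‖(a:ℂ) + (b:ℂ) * z + (a:ℂ) * z ^ 2‖
      ≤ a + b * ‖z‖ + a * ‖z‖ ^ 2 := by
    intro z
    calc ‖(a:ℂ) + (b:ℂ) * z + (a:ℂ) * z ^ 2‖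
        ≤ ‖(a:ℂ) + (b:ℂ) * z‖ + ‖(a:ℂ) * z ^ 2‖ :=
          norm_add_le _ _
      _ ≤ ‖(a:ℂ)‖ + ‖(b:ℂ) * z‖ + ‖(a:ℂ) * z ^ 2‖ := by
          linarith [norm_add_le (a:ℂ) ((b:ℂ) * z)]
      _ = a + b * ‖z‖ + a * ‖z‖ ^ 2 := by
          simp only [norm_mul, norm_pow, Complex.norm_real, Real.norm_eq_abs]
          rw [abs_of_pos ha', abs_of_pos hb']
  have habsP : ∀ z : ℂ, ‖z‖ = ρ →
      ‖(a:ℂ) + (b:ℂ) * z + (a:ℂ) * z ^ 2‖ ≤ Pρ := by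
    intro z hz
    calc ‖(a:ℂ) + (b:ℂ) * z + (a:ℂ) * z ^ 2‖
        ≤ ‖(a:ℂ) + (b:ℂ) * z‖ + ‖(a:ℂ) * z ^ 2‖ :=
          norm_add_le _ _
      _ ≤ ‖(a:ℂ)‖ + ‖(b:ℂ) * z‖ + ‖(a:ℂ) * z ^ 2‖ := by
          linarith [norm_add_le (a:ℂ) ((b:ℂ) * z)]
      _ = a + b * ρ + a * ρ ^ 2 := by
          simp only [norm_mul, norm_pow, hz, Complex.norm_real, Real.norm_eq_abs]
          rw [abs_of_pos ha', abs_of_pos hb']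
      _ = Pρ := by rw [hPρdef]
  have habsPq : ∀ z : ℂ, ‖z‖ = ρ →
      ‖Pq.eval z‖ ≤ Pρ ^ q := by
    intro z hz
    rw [hPz z, norm_pow]
    exact pow_le_pow_left₀ (norm_nonneg _) (habsP z hz) q
  have habs2 : ∀ z : ℂ, ‖z‖ = ρ →
      ‖(a:ℂ) ^ q + (a:ℂ) ^ q * z ^ (2 * q)‖ ≤ a ^ q * (1 + ρ ^ (2 * q)) := by
    intro z hz
    calc ‖(a:ℂ) ^ q + (a:ℂ) ^ q * z ^ (2 * q)‖
        ≤ ‖(a:ℂ) ^ q‖ + ‖(a:ℂ) ^ q * z ^ (2 * q)‖ :=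
          norm_add_le _ _
      _ = a ^ q + a ^ q * ρ ^ (2 * q) := by
          simp only [norm_mul, norm_pow, hz, Complex.norm_real, Real.norm_eq_abs]
          rw [abs_of_pos ha']
      _ = a ^ q * (1 + ρ ^ (2 * q)) := by ring
  have hlamz : ∀ z : ℂ, ‖z‖ = ρ → ρ ^ n ≤ ‖lam * z ^ n‖ := by
    intro z hz
    rw [norm_mul, norm_pow, hz]
    exact le_mul_of_one_le_left (by positivity) hlam
  have hsubne : ∀ (G z : ℂ), ‖z‖ = ρ → ‖G‖ < ρ ^ n →
      lam * z ^ n - G ≠ 0 := by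
    intro G z hz hG h0
    have : lam * z ^ n = G := by linear_combination h0
    rw [← this] at hG
    exact absurd (hlamz z hz) (not_le.2 hG)
  -- stage 1 : A0 ~ A1
  have hcount01 : Multiset.card (A0.roots.filter (fun z => ‖z‖ < ρ)) =
      Multiset.card (A1.roots.filter (fun z => ‖z‖ < ρ)) := by
    apply homotopy_count D hD0 ρ hρ0 A0 A1 hA0deg hA1deg
    · intro t ht
      rw [coeff_add, coeff_C_mul, coeff_C_mul, hA0D, hA1D]
      have hs : (0:ℝ) < 1 - t + t * σ := by nlinarith [ht.1, ht.2]
      have heq : (1 - (t:ℂ)) * -((a:ℂ) ^ q) + (t:ℂ) * -((σ:ℂ) * (a:ℂ) ^ q)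
          = -((((1 - t + t * σ : ℝ)):ℂ) * (a:ℂ) ^ q) := by push_cast; ring
      rw [heq, neg_ne_zero]
      exact mul_ne_zero (by exact_mod_cast ne_of_gt hs) (pow_ne_zero _ haC)
    · intro t ht z hz
      have hs : (0:ℝ) < 1 - t + t * σ := by nlinarith [ht.1, ht.2]
      have hs1 : (1 - t + t * σ : ℝ) ≤ 1 := by nlinarith [ht.1, ht.2]
      have heq : eval z (C (1 - (t:ℂ)) * A0 + C (t:ℂ) * A1)
          = lam * z ^ n - (((1 - t + t * σ : ℝ)):ℂ) * Pq.eval z := by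
        simp only [hA0, hA1, eval_add, eval_mul, eval_sub, eval_C, eval_pow, eval_X]
        push_cast
        ring
      rw [heq]
      apply hsubne _ z hz
      rw [norm_mul, Complex.norm_real, Real.norm_eq_abs, abs_of_pos hs]
      calc (1 - t + t * σ) * ‖Pq.eval z‖ ≤ 1 * Pρ ^ q :=
            mul_le_mul hs1 (habsPq z hz) (norm_nonneg _) zero_le_one
        _ < ρ ^ n := by rw [one_mul]; exact hPρ
  -- stage 2 : A1 ~ A2
  have hcount12 : Multiset.card (A1.roots.filter (fun z => ‖z‖ < ρ)) =
      Multiset.card (A2.roots.filter (fun z => ‖z‖ < ρ)) := by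
    apply homotopy_count D hD0 ρ hρ0 A1 A2 hA1deg hA2deg
    · intro t ht
      rw [coeff_add, coeff_C_mul, coeff_C_mul, hA1D, hA2D]
      have heq : (1 - (t:ℂ)) * -((σ:ℂ) * (a:ℂ) ^ q) + (t:ℂ) * -((σ:ℂ) * (a:ℂ) ^ q)
          = -((σ:ℂ) * (a:ℂ) ^ q) := by ring
      rw [heq, neg_ne_zero]
      exact hσaq
    · intro t ht z hz
      have e1 : ‖1 - (t:ℂ)‖ = 1 - t := by
        rw [show (1 - (t:ℂ)) = ((1 - t : ℝ) : ℂ) by push_cast; ring,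
          Complex.norm_real, Real.norm_eq_abs, abs_of_nonneg (by linarith [ht.2])]
      have e2 : ‖(t:ℂ)‖ = t := by
        rw [Complex.norm_real, Real.norm_eq_abs, abs_of_nonneg ht.1]
      have heq : eval z (C (1 - (t:ℂ)) * A1 + C (t:ℂ) * A2)
          = lam * z ^ n - (σ:ℂ) * ((1 - (t:ℂ)) * Pq.eval z
              + (t:ℂ) * ((a:ℂ) ^ q + (a:ℂ) ^ q * z ^ (2 * q))) := by
        simp only [hA1, hA2, eval_add, eval_mul, eval_sub, eval_C, eval_pow, eval_X]
        ring
      rw [heq]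
      apply hsubne _ z hz
      rw [norm_mul, Complex.norm_real, Real.norm_eq_abs, abs_of_pos hσ0]
      have h1 : ‖(1 - (t:ℂ)) * Pq.eval z
          + (t:ℂ) * ((a:ℂ) ^ q + (a:ℂ) ^ q * z ^ (2 * q))‖ ≤ K := by
        refine le_trans (norm_add_le _ _) ?_
        rw [norm_mul, norm_mul, e1, e2, hK]
        have hw := habsPq z hz
        have hv := habs2 z hz
        nlinarith [mul_nonneg ht.1 (norm_nonneg (Pq.eval z)),
          mul_nonneg ht.1 (norm_nonneg
            ((a:ℂ) ^ q + (a:ℂ) ^ q * z ^ (2 * q))),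
          mul_nonneg (by linarith [ht.2] : (0:ℝ) ≤ 1 - t)
            (norm_nonneg ((a:ℂ) ^ q + (a:ℂ) ^ q * z ^ (2 * q))),
          ht.1, ht.2]
      calc σ * ‖(1 - (t:ℂ)) * Pq.eval z
            + (t:ℂ) * ((a:ℂ) ^ q + (a:ℂ) ^ q * z ^ (2 * q))‖
          ≤ σ * K := by
            exact mul_le_mul_of_nonneg_left h1 (le_of_lt hσ0)
        _ < ρ ^ n := hσK
  -- stage 3 : A2 ~ A3
  have hcount23 : Multiset.card (A2.roots.filter (fun z => ‖z‖ < ρ)) =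
      Multiset.card (A3.roots.filter (fun z => ‖z‖ < ρ)) := by
    apply homotopy_count D hD0 ρ hρ0 A2 A3 hA2deg hA3deg
    · intro t ht
      rw [coeff_add, coeff_C_mul, coeff_C_mul, hA2D, hA3D]
      have heq : (1 - (t:ℂ)) * -((σ:ℂ) * (a:ℂ) ^ q) + (t:ℂ) * -((σ:ℂ) * (a:ℂ) ^ q)
          = -((σ:ℂ) * (a:ℂ) ^ q) := by ring
      rw [heq, neg_ne_zero]
      exact hσaq
    · intro t ht z hz
      have e1 : ‖1 - (t:ℂ)‖ = 1 - t := by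
        rw [show (1 - (t:ℂ)) = ((1 - t : ℝ) : ℂ) by push_cast; ring,
          Complex.norm_real, Real.norm_eq_abs, abs_of_nonneg (by linarith [ht.2])]
      have heq : eval z (C (1 - (t:ℂ)) * A2 + C (t:ℂ) * A3)
          = lam * z ^ n - (σ:ℂ) * ((1 - (t:ℂ)) * (a:ℂ) ^ q
              + (a:ℂ) ^ q * z ^ (2 * q)) := by
        simp only [hA2, hA3, eval_add, eval_mul, eval_sub, eval_C, eval_pow, eval_X]
        ring
      rw [heq]
      apply hsubne _ z hz
      rw [norm_mul, Complex.norm_real, Real.norm_eq_abs, abs_of_pos hσ0]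
      have h1 : ‖(1 - (t:ℂ)) * (a:ℂ) ^ q + (a:ℂ) ^ q * z ^ (2 * q)‖ ≤ K := by
        refine le_trans (norm_add_le _ _) ?_
        rw [norm_mul, norm_mul, e1, norm_pow, norm_pow, hz, Complex.norm_real, Real.norm_eq_abs, abs_of_pos ha',
          hK]
        nlinarith [ht.1, ht.2, pow_pos ha' q, pow_pos hρ0 (2 * q), pow_pos hPρpos q,
          mul_nonneg ht.1 (le_of_lt (pow_pos ha' q))]
      calc σ * ‖(1 - (t:ℂ)) * (a:ℂ) ^ q + (a:ℂ) ^ q * z ^ (2 * q)‖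
          ≤ σ * K := mul_le_mul_of_nonneg_left h1 (le_of_lt hσ0)
        _ < ρ ^ n := hσK
  -- endpoint count for A3
  have hfac : A3 = X ^ n * (C lam - C ((σ:ℂ) * (a:ℂ) ^ q) * X ^ (q + p)) := by
    rw [hA3]
    have hnpq : 2 * q = n + (q + p) := by omega
    rw [hnpq, pow_add]
    ring
  have hGne : (C lam - C ((σ:ℂ) * (a:ℂ) ^ q) * X ^ (q + p) : Polynomial ℂ) ≠ 0 := by
    intro h0
    have h1 : (C lam - C ((σ:ℂ) * (a:ℂ) ^ q) * X ^ (q + p) : Polynomial ℂ).coeff (q + p)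
        = 0 := by rw [h0]; simp
    rw [coeff_sub, coeff_C, if_neg (by omega : ¬ q + p = 0), coeff_C_mul, coeff_X_pow,
      if_pos rfl] at h1
    apply hσaq
    linear_combination -h1
  have hA3ne : A3 ≠ 0 := by
    rw [hfac]; exact mul_ne_zero (pow_ne_zero _ X_ne_zero) hGne
  have hrootsA3 : A3.roots = n • ({0} : Multiset ℂ)
      + (C lam - C ((σ:ℂ) * (a:ℂ) ^ q) * X ^ (q + p)).roots := by
    conv_lhs => rw [hfac]
    rw [hfac] at hA3ne
    rw [roots_mul hA3ne, roots_pow, roots_X]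
  have hGroots : ∀ z ∈ (C lam - C ((σ:ℂ) * (a:ℂ) ^ q) * X ^ (q + p)).roots,
      ¬ (‖z‖ < ρ) := by
    intro z hzr hlt
    have hz0 := (mem_roots'.1 hzr).2
    simp only [IsRoot, eval_sub, eval_mul, eval_C, eval_pow, eval_X] at hz0
    have hze : lam = ((σ:ℂ) * (a:ℂ) ^ q) * z ^ (q + p) := by linear_combination hz0
    have habs : ‖lam‖ = σ * a ^ q * ‖z‖ ^ (q + p) := by
      rw [hze]
      simp only [norm_mul, norm_pow, Complex.norm_real, Real.norm_eq_abs]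
      rw [abs_of_pos hσ0, abs_of_pos ha']
    have hle : ‖z‖ ^ (q + p) ≤ ρ ^ (q + p) :=
      pow_le_pow_left₀ (norm_nonneg _) (le_of_lt hlt) _
    have : ‖lam‖ < 1 := by
      rw [habs]
      calc σ * a ^ q * ‖z‖ ^ (q + p) ≤ σ * a ^ q * ρ ^ (q + p) := by
            exact mul_le_mul_of_nonneg_left hle (by positivity)
        _ = σ * (a ^ q * ρ ^ (q + p)) := by ring
        _ < 1 := hσρ
    linarith [hlam]
  have hcount3 : Multiset.card (A3.roots.filter (fun z => ‖z‖ < ρ)) = n := by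
    rw [hrootsA3, Multiset.filter_add, Multiset.card_add]
    have h1 : Multiset.filter (fun z => ‖z‖ < ρ) (n • ({0} : Multiset ℂ))
        = n • ({0} : Multiset ℂ) := by
      apply Multiset.filter_eq_self.2
      intro z hzm
      have hz0 : z = 0 := by
        rw [Multiset.nsmul_singleton] at hzm
        exact Multiset.eq_of_mem_replicate hzm
      rw [hz0]
      simpa using hρ0
    have h2 : Multiset.filter (fun z => ‖z‖ < ρ)
        (C lam - C ((σ:ℂ) * (a:ℂ) ^ q) * X ^ (q + p) : Polynomial ℂ).roots = 0 :=
      Multiset.filter_eq_nil.2 hGroots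
    rw [h1, h2]
    simp [Multiset.nsmul_singleton]
  -- roots of A0 avoid the annulus
  have hannulus : ∀ z ∈ A0.roots, (‖z‖ ≤ γs ↔ ‖z‖ < ρ) := by
    intro z hzr
    have hz0 := (mem_roots'.1 hzr).2
    simp only [IsRoot, hA0, eval_sub, eval_mul, eval_C, eval_pow, eval_X] at hz0
    have hze : lam * z ^ n = Pq.eval z := by linear_combination hz0
    constructor
    · intro h; exact lt_of_le_of_lt h hρs
    · intro h
      by_contra hgt
      push_neg at hgt
      have hzw : ‖z‖ < γw := lt_trans h hρw
      have h1 : ‖Pq.eval z‖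
          ≤ (a + b * ‖z‖ + a * ‖z‖ ^ 2) ^ q := by
        rw [hPz, norm_pow]
        exact pow_le_pow_left₀ (norm_nonneg _) (habsPgen z) q
      have h2 : (a + b * ‖z‖ + a * ‖z‖ ^ 2) ^ q
          < ‖z‖ ^ n := hkey _ hgt hzw
      have h3 : ‖z‖ ^ n ≤ ‖lam * z ^ n‖ := by
        rw [norm_mul, norm_pow]
        exact le_mul_of_one_le_left (by positivity) hlam
      have h4 : ‖lam * z ^ n‖ = ‖Pq.eval z‖ := by rw [hze]
      linarith
  calc Multiset.card (A0.roots.filter (fun z => ‖z‖ ≤ γs))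
      = Multiset.card (A0.roots.filter (fun z => ‖z‖ < ρ)) := by
        rw [Multiset.filter_congr hannulus]
    _ = n := by rw [hcount01, hcount12, hcount23, hcount3]
end
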